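/- arXiv:0709.0373 — 3 statements merged into one kernel-verified Lean document; each statement's English description precedes it below -/
import Mathlib

section
/- Let B be a finite set of linear subspaces of ℂ^l containing two subspaces u and v with u ⊊ v, and let B' = B \ {u}. Then the natural inclusion of cochain complexes D(B') ↪ D(B) (sending a subset σ ⊆ B' to itself as a subset of B) is a quasi-isomorphism, i.e., it induces an isomorphism H^q(D(B')) ≅ H^q(D(B)) in every degree q. -/
/-!
Formalization of the Yuzvinsky–Feichtner rational model `D(B)` of the
complement of an arrangement of linear subspaces of `ℂ^l`, together with the
deletion/restriction constructions of the paper.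
-/

open scoped Classical

noncomputable section

/-- The type of linear subspaces of `ℂ^l`. -/
abbrev Subsp (l : ℕ) := Submodule ℂ (Fin l → ℂ)

/-- Intersection of a finite set of subspaces (`⊤`, i.e. `ℂ^l`, for the empty set). -/
def inter {l : ℕ} (σ : Finset (Subsp l)) : Subsp l := σ.inf id

/-- Underlying vector space of the Yuzvinsky–Feichtner model: formal ℚ-linear
combinations of finite sets of subspaces (basis elements are the `σ ⊆ B`). -/
abbrev DFull (l : ℕ) := Finset (Subsp l) →₀ ℚ

/-- 1-based position of `x` inside `σ`, with respect to the linear order `r`. -/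
def pos {l : ℕ} (r : LinearOrder (Subsp l)) (σ : Finset (Subsp l)) (x : Subsp l) : ℕ :=
  (σ.filter fun y => r.lt y x).card + 1

/-- Value of the differential on the basis element `σ`:
`dσ = ∑_{j : ∩(σ∖{x_j}) = ∩σ} (−1)^j (σ∖{x_j})`. -/
def dBasis {l : ℕ} (r : LinearOrder (Subsp l)) (σ : Finset (Subsp l)) : DFull l :=
  ∑ x ∈ σ.filter fun x => inter (σ.erase x) = inter σ,
    ((-1 : ℚ) ^ pos r σ x) • Finsupp.single (σ.erase x) (1 : ℚ)

/-- The differential of the Yuzvinsky–Feichtner complex. -/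
def diff {l : ℕ} (r : LinearOrder (Subsp l)) : DFull l →ₗ[ℚ] DFull l :=
  Finsupp.lsum ℚ fun σ => LinearMap.toSpanSingleton ℚ (DFull l) (dBasis r σ)

/-- Codimension of `W` inside the ambient subspace `X` (as an integer). -/
def codimIn {l : ℕ} (X W : Subsp l) : ℤ :=
  (Module.finrank ℂ X : ℤ) - (Module.finrank ℂ (W ⊓ X : Subsp l) : ℤ)

/-- Codimension of `W` in `ℂ^l`. -/
def codim {l : ℕ} (W : Subsp l) : ℤ := codimIn ⊤ W

/-- Degree of the basis element `σ`: `deg σ = 2 codim (∩σ) − |σ|`, the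
codimension being computed inside the ambient space `X`. -/
def degIn {l : ℕ} (X : Subsp l) (σ : Finset (Subsp l)) : ℤ :=
  2 * codimIn X (inter σ) - (σ.card : ℤ)

/-- `D(B)`: the span of the basis elements `σ ⊆ B`. -/
def Dsub {l : ℕ} (B : Finset (Subsp l)) : Submodule ℚ (DFull l) :=
  Submodule.span ℚ {f | ∃ σ : Finset (Subsp l), σ ⊆ B ∧ f = Finsupp.single σ (1 : ℚ)}

/-- The degree-`q` component of `D(B)` (ambient space `X`). -/
def Dcomp {l : ℕ} (X : Subsp l) (B : Finset (Subsp l)) (q : ℤ) : Submodule ℚ (DFull l) :=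
  Submodule.span ℚ
    {f | ∃ σ : Finset (Subsp l), σ ⊆ B ∧ degIn X σ = q ∧ f = Finsupp.single σ (1 : ℚ)}

/-- Degree-`q` cocycles of `D(B)`. -/
def cocycles {l : ℕ} (r : LinearOrder (Subsp l)) (X : Subsp l) (B : Finset (Subsp l)) (q : ℤ) :
    Submodule ℚ (DFull l) :=
  Dcomp X B q ⊓ LinearMap.ker (diff r)

/-- Degree-`q` coboundaries of `D(B)`. -/
def cobounds {l : ℕ} (r : LinearOrder (Subsp l)) (X : Subsp l) (B : Finset (Subsp l)) (q : ℤ) :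
    Submodule ℚ (DFull l) :=
  Dcomp X B q ⊓ Submodule.map (diff r) (Dcomp X B (q - 1))

/-- Degree-`q` cohomology `H^q(D(B))`. -/
abbrev cohomology {l : ℕ} (r : LinearOrder (Subsp l)) (X : Subsp l) (B : Finset (Subsp l)) (q : ℤ) :=
  cocycles r X B q ⧸ Submodule.comap (cocycles r X B q).subtype (cobounds r X B q)

lemma Dcomp_mono {l : ℕ} (X : Subsp l) {B B' : Finset (Subsp l)} (h : B' ⊆ B) (q : ℤ) :
    Dcomp X B' q ≤ Dcomp X B q :=
  Submodule.span_mono (by rintro f ⟨σ, h1, h2, rfl⟩; exact ⟨σ, h1.trans h, h2, rfl⟩)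

lemma cocycles_mono {l : ℕ} (r : LinearOrder (Subsp l)) (X : Subsp l) {B B' : Finset (Subsp l)}
    (h : B' ⊆ B) (q : ℤ) : cocycles r X B' q ≤ cocycles r X B q :=
  inf_le_inf_right _ (Dcomp_mono X h q)

lemma cobounds_mono {l : ℕ} (r : LinearOrder (Subsp l)) (X : Subsp l) {B B' : Finset (Subsp l)}
    (h : B' ⊆ B) (q : ℤ) : cobounds r X B' q ≤ cobounds r X B q :=
  inf_le_inf (Dcomp_mono X h q) (Submodule.map_mono (Dcomp_mono X h (q - 1)))

/-- The map induced in degree-`q` cohomology by an inclusion of arrangements `B' ⊆ B`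
(induced by the inclusion of cochain complexes `D(B') ↪ D(B)`). -/
def inducedMap {l : ℕ} (r : LinearOrder (Subsp l)) (X : Subsp l) {B B' : Finset (Subsp l)}
    (h : B' ⊆ B) (q : ℤ) : cohomology r X B' q →ₗ[ℚ] cohomology r X B q :=
  Submodule.mapQ (Submodule.comap (cocycles r X B' q).subtype (cobounds r X B' q))
    (Submodule.comap (cocycles r X B q).subtype (cobounds r X B q))
    (Submodule.inclusion (cocycles_mono r X h q)) (by
      intro v hv
      simp only [Submodule.mem_comap, Submodule.subtype_apply, Submodule.coe_inclusion] at hv ⊢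
      exact cobounds_mono r X h q hv)

lemma eraseSubset {l : ℕ} (A : Finset (Subsp l)) (x₀ : Subsp l) : A.erase x₀ ⊆ A := by
  intro y hy; exact Finset.mem_of_mem_erase hy

/-- A subspace arrangement: no member is contained in another. -/
def IsArrangement {l : ℕ} (A : Finset (Subsp l)) : Prop :=
  ∀ x ∈ A, ∀ y ∈ A, x ≤ y → x = y

/-- `Ã'' = {x₀ ∩ y | y ∈ A'}`. -/
def tildeRestriction {l : ℕ} (x₀ : Subsp l) (A' : Finset (Subsp l)) : Finset (Subsp l) :=
  A'.image fun y => x₀ ⊓ y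

/-- The restricted arrangement `A''`: the elements of `Ã''` that are not strictly
contained in another element of `Ã''`. -/
def restriction {l : ℕ} (x₀ : Subsp l) (A' : Finset (Subsp l)) : Finset (Subsp l) :=
  (tildeRestriction x₀ A').filter fun w => ∀ w' ∈ tildeRestriction x₀ A', ¬ w < w'

lemma restriction_subset {l : ℕ} (x₀ : Subsp l) (A' : Finset (Subsp l)) :
    restriction x₀ A' ⊆ tildeRestriction x₀ A' := Finset.filter_subset _ _

/-- `x₀` is a separator: `x₀ ∩ (∩ A') ⊊ ∩ A'`. -/
def IsSeparator {l : ℕ} (A : Finset (Subsp l)) (x₀ : Subsp l) : Prop :=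
  x₀ ⊓ inter (A.erase x₀) < inter (A.erase x₀)

/-- The conditions imposed in the paper on the fixed linear order on the
subspaces: `x₀` comes first, the equivalence classes of
`y ∼ z ⟺ x₀ ∩ y = x₀ ∩ z` on `A' = A ∖ {x₀}` are consecutive intervals,
and the order on `Ã''` is compatible with the one on `A'`. -/
def GoodOrder {l : ℕ} (r : LinearOrder (Subsp l)) (A : Finset (Subsp l)) (x₀ : Subsp l) : Prop :=
  (∀ y ∈ A.erase x₀, r.lt x₀ y) ∧
  (∀ y ∈ A.erase x₀, ∀ z ∈ A.erase x₀, ∀ w ∈ A.erase x₀,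
      r.le y z → r.le z w → x₀ ⊓ y = x₀ ⊓ w → x₀ ⊓ y = x₀ ⊓ z) ∧
  (∀ y ∈ A.erase x₀, ∀ z ∈ A.erase x₀, r.lt y z → x₀ ⊓ y ≠ x₀ ⊓ z →
      r.lt (x₀ ⊓ y) (x₀ ⊓ z))

/-- Value of the map `φ` on a basis element `σ`. -/
def phiBasis {l : ℕ} (x₀ : Subsp l) (σ : Finset (Subsp l)) : DFull l :=
  if x₀ ∈ σ ∧ Set.InjOn (fun y => x₀ ⊓ y) ↑(σ.erase x₀) then
    ((-1 : ℚ) ^ (σ.card - 1)) • Finsupp.single ((σ.erase x₀).image fun y => x₀ ⊓ y) (1 : ℚ)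
  else 0

/-- The map `φ : D(A) → D(Ã'')` (defined on the whole ambient space). -/
def phi {l : ℕ} (x₀ : Subsp l) : DFull l →ₗ[ℚ] DFull l :=
  Finsupp.lsum ℚ fun σ => LinearMap.toSpanSingleton ℚ (DFull l) (phiBasis x₀ σ)

lemma phi_apply_single {l : ℕ} (x₀ : Subsp l) (σ : Finset (Subsp l)) :
    phi x₀ (Finsupp.single σ (1 : ℚ)) = phiBasis x₀ σ := by
  simp [phi]

lemma diff_apply_single {l : ℕ} (r : LinearOrder (Subsp l)) (σ : Finset (Subsp l)) :
    diff r (Finsupp.single σ (1 : ℚ)) = dBasis r σ := by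
  simp [diff]

lemma phi_vanish {l : ℕ} (x₀ : Subsp l) {B : Finset (Subsp l)} (hx : x₀ ∉ B) :
    ∀ f ∈ Dsub B, phi x₀ f = 0 := by
  intro f hf
  induction hf using Submodule.span_induction with
  | mem f hfmem =>
      obtain ⟨σ, hσ, rfl⟩ := hfmem
      rw [phi_apply_single]
      have hx₀σ : ¬ x₀ ∈ σ := fun h => hx (hσ h)
      simp [phiBasis, hx₀σ]
  | zero => simp
  | add f g _ _ hf hg => simp [map_add, hf, hg]
  | smul c f _ hf => simp [map_smul, hf]

lemma diff_mem {l : ℕ} (r : LinearOrder (Subsp l)) {B : Finset (Subsp l)} :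
    ∀ f ∈ Dsub B, diff r f ∈ Dsub B := by
  intro f hf
  induction hf using Submodule.span_induction with
  | mem f hfmem =>
      obtain ⟨σ, hσ, rfl⟩ := hfmem
      rw [diff_apply_single, dBasis]
      refine Submodule.sum_mem _ fun x hx => Submodule.smul_mem _ _ ?_
      exact Submodule.subset_span ⟨σ.erase x, (Finset.erase_subset _ _).trans hσ, rfl⟩
  | zero => simp
  | add f g _ _ hf hg => rw [map_add]; exact (Dsub B).add_mem hf hg
  | smul c f _ hf => rw [map_smul]; exact (Dsub B).smul_mem c hf

/-- The quotient cochain complex `D(A)/D(A')`. -/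
abbrev DQuot {l : ℕ} (A : Finset (Subsp l)) (x₀ : Subsp l) :=
  Dsub A ⧸ Submodule.comap (Dsub A).subtype (Dsub (A.erase x₀))

/-- Projection `D(A) → D(A)/D(A')`. -/
def quotProj {l : ℕ} (A : Finset (Subsp l)) (x₀ : Subsp l) : Dsub A →ₗ[ℚ] DQuot A x₀ :=
  (Submodule.comap (Dsub A).subtype (Dsub (A.erase x₀))).mkQ

/-- The differential, restricted to `D(A)`. -/
def diffRes {l : ℕ} (r : LinearOrder (Subsp l)) (A : Finset (Subsp l)) : Dsub A →ₗ[ℚ] Dsub A :=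
  (diff r).restrict fun f hf => diff_mem r f hf

/-- The differential of the quotient complex `D(A)/D(A')`. -/
def diffQuot {l : ℕ} (r : LinearOrder (Subsp l)) (A : Finset (Subsp l)) (x₀ : Subsp l) :
    DQuot A x₀ →ₗ[ℚ] DQuot A x₀ :=
  Submodule.mapQ _ _ (diffRes r A) (by
      intro v hv
      simp only [Submodule.mem_comap, Submodule.subtype_apply] at hv ⊢
      exact diff_mem r _ hv)

/-- The map `φ̄ : D(A)/D(A') → D(Ã'')` induced by `φ`. -/
def phiBar {l : ℕ} (x₀ : Subsp l) (A : Finset (Subsp l)) : DQuot A x₀ →ₗ[ℚ] DFull l :=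
  Submodule.liftQ _ ((phi x₀).comp (Dsub A).subtype) (by
    intro v hv
    simp only [Submodule.mem_comap, Submodule.subtype_apply] at hv
    simp only [LinearMap.mem_ker, LinearMap.comp_apply, Submodule.subtype_apply]
    exact phi_vanish x₀ (Finset.notMem_erase x₀ A) _ hv)

/-- The subspace `I_{u,v}` of `D(A)/D(A')`, as a subspace of `D(A)` before
projecting: spanned by the `{x₀,u,τ} − {x₀,v,τ}` and the `{x₀,u,v,τ}`. -/
def IuvFull {l : ℕ} (A : Finset (Subsp l)) (x₀ u v : Subsp l) : Submodule ℚ (DFull l) :=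
  Submodule.span ℚ
    ({f | ∃ τ : Finset (Subsp l), (↑τ : Set (Subsp l)) ⊆ ↑A \ {x₀, u, v} ∧
        f = Finsupp.single (insert x₀ (insert u τ)) (1 : ℚ)
          - Finsupp.single (insert x₀ (insert v τ)) (1 : ℚ)} ∪
     {f | ∃ τ : Finset (Subsp l), (↑τ : Set (Subsp l)) ⊆ ↑A \ {x₀, u, v} ∧
        f = Finsupp.single (insert x₀ (insert u (insert v τ))) (1 : ℚ)})

/-- The subspace `I_{u,v} ⊆ D(A)/D(A')`. -/
def Iuv {l : ℕ} (A : Finset (Subsp l)) (x₀ u v : Subsp l) : Submodule ℚ (DQuot A x₀) :=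
  Submodule.map (quotProj A x₀) (Submodule.comap (Dsub A).subtype (IuvFull A x₀ u v))

/-- The set `E` of pairs `(y,z)` of distinct elements of `A'` with `x₀ ∩ y = x₀ ∩ z`. -/
def Epairs {l : ℕ} (A : Finset (Subsp l)) (x₀ : Subsp l) : Set (Subsp l × Subsp l) :=
  {p | p.1 ∈ A.erase x₀ ∧ p.2 ∈ A.erase x₀ ∧ x₀ ⊓ p.1 = x₀ ⊓ p.2 ∧ p.1 ≠ p.2}

/-- The subspace `V = Σ_{(u,v) ∈ E} I_{u,v}` of `D(A)/D(A')`. -/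
def Vsub {l : ℕ} (A : Finset (Subsp l)) (x₀ : Subsp l) : Submodule ℚ (DQuot A x₀) :=
  ⨆ p ∈ Epairs A x₀, Iuv A x₀ p.1 p.2

/-- Degree-`q` part of the quotient complex `D(A)/D(A')`. -/
def DcompQuot {l : ℕ} (X : Subsp l) (A : Finset (Subsp l)) (x₀ : Subsp l) (q : ℤ) :
    Submodule ℚ (DQuot A x₀) :=
  Submodule.map (quotProj A x₀) (Submodule.comap (Dsub A).subtype (Dcomp X A q))

def cocyclesQuot {l : ℕ} (r : LinearOrder (Subsp l)) (X : Subsp l) (A : Finset (Subsp l))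
    (x₀ : Subsp l) (q : ℤ) : Submodule ℚ (DQuot A x₀) :=
  DcompQuot X A x₀ q ⊓ LinearMap.ker (diffQuot r A x₀)

def coboundsQuot {l : ℕ} (r : LinearOrder (Subsp l)) (X : Subsp l) (A : Finset (Subsp l))
    (x₀ : Subsp l) (q : ℤ) : Submodule ℚ (DQuot A x₀) :=
  DcompQuot X A x₀ q ⊓ Submodule.map (diffQuot r A x₀) (DcompQuot X A x₀ (q - 1))

/-- Degree-`q` cohomology of the quotient complex `D(A)/D(A')`. -/
abbrev cohomologyQuot {l : ℕ} (r : LinearOrder (Subsp l)) (X : Subsp l) (A : Finset (Subsp l))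
    (x₀ : Subsp l) (q : ℤ) :=
  cocyclesQuot r X A x₀ q ⧸
    Submodule.comap (cocyclesQuot r X A x₀ q).subtype (coboundsQuot r X A x₀ q)

/-- Ungraded cocycles of `D(B)`. -/
def cocyclesAll {l : ℕ} (r : LinearOrder (Subsp l)) (B : Finset (Subsp l)) :
    Submodule ℚ (DFull l) :=
  Dsub B ⊓ LinearMap.ker (diff r)

/-- Ungraded coboundaries of `D(B)`. -/
def coboundsAll {l : ℕ} (r : LinearOrder (Subsp l)) (B : Finset (Subsp l)) :
    Submodule ℚ (DFull l) :=
  Dsub B ⊓ Submodule.map (diff r) (Dsub B)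

/-- Ungraded cohomology `H^*(D(B))`. -/
abbrev cohomologyAll {l : ℕ} (r : LinearOrder (Subsp l)) (B : Finset (Subsp l)) :=
  cocyclesAll r B ⧸ Submodule.comap (cocyclesAll r B).subtype (coboundsAll r B)

/-- The map `θ : D(A') → D(Ã'')`, `{x_{i₁},…,x_{i_r}} ↦ {x₀ ∩ x_{i₁},…,x₀ ∩ x_{i_r}}`. -/
def theta {l : ℕ} (x₀ : Subsp l) : DFull l →ₗ[ℚ] DFull l :=
  Finsupp.lsum ℚ fun σ =>
    LinearMap.toSpanSingleton ℚ (DFull l) (Finsupp.single (σ.image fun y => x₀ ⊓ y) (1 : ℚ))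

/-- The map `k : D(A) → D(A')`, the identity on basis elements not containing
`x₀`, and zero on those containing `x₀`. -/
def kmap {l : ℕ} (x₀ : Subsp l) : DFull l →ₗ[ℚ] DFull l :=
  Finsupp.lsum ℚ fun σ =>
    if x₀ ∈ σ then 0 else LinearMap.toSpanSingleton ℚ (DFull l) (Finsupp.single σ (1 : ℚ))

/-- The Euler characteristic of `D(A)`:
`χ = Σ_q (−1)^q dim_ℚ H^q(D(A))` (all degrees lie in `[−|A|, 2l]`). -/
def eulerChar {l : ℕ} (r : LinearOrder (Subsp l)) (A : Finset (Subsp l)) : ℚ :=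
  ∑ q ∈ Finset.Icc (-(A.card : ℤ)) (2 * l : ℤ),
    (-1 : ℚ) ^ q * (Module.finrank ℚ (cohomology r ⊤ A q) : ℚ)

/-- The intersection lattice `L(A)`: all intersections of members of `A`
(with `ℂ^l = ∩∅` as bottom element), ordered by reverse inclusion. -/
def latticeSet {l : ℕ} (A : Finset (Subsp l)) : Set (Subsp l) :=
  {W | ∃ S : Finset (Subsp l), S ⊆ A ∧ W = inter S}

/-- `covL A a b`: in the intersection lattice `L(A)` (ordered by reverse
inclusion), `b` covers `a`. -/
def covL {l : ℕ} (A : Finset (Subsp l)) (a b : Subsp l) : Prop :=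
  b < a ∧ ∀ c ∈ latticeSet A, ¬(b < c ∧ c < a)

/-- The meet `a ∧ b` in the intersection lattice `L(A)`: the intersection of
the members of `A` containing both `a` and `b`. -/
def meetL {l : ℕ} (A : Finset (Subsp l)) (a b : Subsp l) : Subsp l :=
  inter (A.filter fun x => a ≤ x ∧ b ≤ x)

/-- `L(A)` is a geometric lattice: it is a finite atomistic semimodular lattice.
(Atoms are the elements covering the bottom element `ℂ^l`; every element is the
join — i.e. intersection — of the atoms it lies above; and the lattice is
(upper) semimodular.  The join of `a` and `b` in `L(A)` is `a ⊓ b`.) -/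
def IsGeometricL {l : ℕ} (A : Finset (Subsp l)) : Prop :=
  (∀ a ∈ latticeSet A, a = sInf {t : Subsp l | t ∈ latticeSet A ∧ covL A ⊤ t ∧ a ≤ t}) ∧
  (∀ a ∈ latticeSet A, ∀ b ∈ latticeSet A, covL A (meetL A a b) a → covL A b (a ⊓ b))

end

noncomputable section AuxProof

open Finset

variable {l : ℕ}

lemma neg_one_pow_helper {m n : ℕ} (h : Odd (m + n)) : (-1 : ℚ) ^ m = -(-1 : ℚ) ^ n := by
  have e1 : (-1 : ℚ) ^ m * (-1 : ℚ) ^ n = -1 := by rw [← pow_add]; exact Odd.neg_one_pow h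
  have e2 : (-1 : ℚ) ^ n * (-1 : ℚ) ^ n = 1 := by
    rw [← pow_add]; exact Even.neg_one_pow ⟨n, rfl⟩
  linear_combination (-1 : ℚ) ^ n * e1 - (-1 : ℚ) ^ m * e2

lemma rlt_cases (r : LinearOrder (Subsp l)) {x y : Subsp l} (hxy : x ≠ y) :
    (r.lt x y ∧ ¬ r.lt y x) ∨ (r.lt y x ∧ ¬ r.lt x y) := by
  have hlt : ∀ a b : Subsp l, r.lt a b ↔ r.le a b ∧ ¬ r.le b a := r.lt_iff_le_not_ge
  rcases r.le_total x y with h | h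
  · exact Or.inl ⟨(hlt x y).2 ⟨h, fun h' => hxy (r.le_antisymm x y h h')⟩,
      fun h' => ((hlt y x).1 h').2 h⟩
  · exact Or.inr ⟨(hlt y x).2 ⟨h, fun h' => hxy (r.le_antisymm x y h' h)⟩,
      fun h' => ((hlt x y).1 h').2 h⟩

lemma pos_erase (r : LinearOrder (Subsp l)) {σ : Finset (Subsp l)} {x y : Subsp l}
    (hx : x ∈ σ) :
    pos r (σ.erase x) y + (if r.lt x y then 1 else 0) = pos r σ y := by
  unfold pos
  rw [Finset.filter_erase]
  by_cases h : r.lt x y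
  · have hmem : x ∈ σ.filter (fun z => r.lt z y) := Finset.mem_filter.2 ⟨hx, h⟩
    rw [Finset.card_erase_of_mem hmem]
    have h1 : 1 ≤ (σ.filter (fun z => r.lt z y)).card := Finset.card_pos.2 ⟨x, hmem⟩
    simp only [if_pos h]
    omega
  · rw [Finset.erase_eq_of_notMem (by simp [h])]
    simp [h]

lemma pos_sum_erase (r : LinearOrder (Subsp l)) {σ : Finset (Subsp l)} {x y : Subsp l}
    (hx : x ∈ σ) (hy : y ∈ σ) (hxy : x ≠ y) :
    pos r (σ.erase x) y + pos r (σ.erase y) x + 1 = pos r σ x + pos r σ y := by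
  have h1 := pos_erase r (y := y) hx
  have h2 := pos_erase r (y := x) hy
  rcases rlt_cases r hxy with ⟨h, h'⟩ | ⟨h, h'⟩
  · rw [if_pos h] at h1; rw [if_neg h'] at h2; omega
  · rw [if_neg h'] at h1; rw [if_pos h] at h2; omega

lemma sign_erase (r : LinearOrder (Subsp l)) {σ : Finset (Subsp l)} {x y : Subsp l}
    (hx : x ∈ σ) (hy : y ∈ σ) (hxy : x ≠ y) :
    (-1 : ℚ) ^ (pos r σ x + pos r (σ.erase x) y)
      = -(-1 : ℚ) ^ (pos r σ y + pos r (σ.erase y) x) := by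
  apply neg_one_pow_helper
  have h := pos_sum_erase r hx hy hxy
  exact ⟨pos r σ x + pos r σ y - 1, by omega⟩

lemma inter_mono {σ τ : Finset (Subsp l)} (h : σ ⊆ τ) : inter τ ≤ inter σ :=
  Finset.inf_mono h

lemma inter_erase_sandwich (r : LinearOrder (Subsp l)) {σ : Finset (Subsp l)} {x y : Subsp l}
    (h : inter ((σ.erase x).erase y) = inter σ) :
    inter (σ.erase x) = inter σ ∧ inter ((σ.erase x).erase y) = inter (σ.erase x) := by
  have h1 : inter σ ≤ inter (σ.erase x) := inter_mono (Finset.erase_subset _ _)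
  have h2 : inter (σ.erase x) ≤ inter ((σ.erase x).erase y) := inter_mono (Finset.erase_subset _ _)
  have e1 : inter (σ.erase x) = inter σ := le_antisymm (le_of_le_of_eq h2 h) h1
  exact ⟨e1, h.trans e1.symm⟩

lemma diff_diff_single (r : LinearOrder (Subsp l)) (σ : Finset (Subsp l)) :
    diff r (dBasis r σ) = 0 := by
  rw [dBasis, map_sum]
  have step : ∀ x ∈ σ.filter (fun x => inter (σ.erase x) = inter σ),
      diff r (((-1 : ℚ) ^ pos r σ x) • Finsupp.single (σ.erase x) (1 : ℚ))
        = ∑ y ∈ (σ.erase x).filter (fun y => inter ((σ.erase x).erase y) = inter (σ.erase x)),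
            (((-1 : ℚ) ^ pos r σ x) * ((-1 : ℚ) ^ pos r (σ.erase x) y)) •
              Finsupp.single ((σ.erase x).erase y) (1 : ℚ) := by
    intro x _
    rw [map_smul, diff_apply_single, dBasis, Finset.smul_sum]
    exact Finset.sum_congr rfl fun y _ => by rw [smul_smul]
  rw [Finset.sum_congr rfl step, Finset.sum_sigma']
  refine Finset.sum_involution (fun p hp => ⟨p.2, p.1⟩) ?_ ?_ ?_ ?_
  · rintro ⟨x, y⟩ hp
    rw [Finset.mem_sigma] at hp
    obtain ⟨hx, hy⟩ := hp
    rw [Finset.mem_filter] at hx hy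
    have hyx : y ≠ x := (Finset.mem_erase.1 hy.1).1
    have hyσ : y ∈ σ := Finset.mem_of_mem_erase hy.1
    have heq : ((σ.erase x).erase y) = ((σ.erase y).erase x) := Finset.erase_right_comm
    have hsign := sign_erase r hx.1 hyσ (Ne.symm hyx)
    simp only
    rw [heq, ← add_smul, ← pow_add, ← pow_add, hsign, neg_add_cancel, zero_smul]
  · rintro ⟨x, y⟩ hp _
    rw [Finset.mem_sigma] at hp
    have hyx : y ≠ x := (Finset.mem_erase.1 (Finset.mem_filter.1 hp.2).1).1
    intro hcon
    exact hyx (congrArg Sigma.fst hcon)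
  · rintro ⟨x, y⟩ hp
    rw [Finset.mem_sigma] at hp ⊢
    obtain ⟨hx, hy⟩ := hp
    rw [Finset.mem_filter] at hx hy
    have hyx : y ≠ x := (Finset.mem_erase.1 hy.1).1
    have hyσ : y ∈ σ := Finset.mem_of_mem_erase hy.1
    have heq : ((σ.erase x).erase y) = ((σ.erase y).erase x) := Finset.erase_right_comm
    have hfull : inter ((σ.erase y).erase x) = inter σ := by
      rw [← heq, hy.2, hx.2]
    obtain ⟨g1, g2⟩ := inter_erase_sandwich r hfull
    constructor
    · exact Finset.mem_filter.2 ⟨hyσ, g1⟩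
    · exact Finset.mem_filter.2 ⟨Finset.mem_erase.2 ⟨hyx.symm, hx.1⟩, g2⟩
  · rintro ⟨x, y⟩ _
    rfl

lemma diff_diff (r : LinearOrder (Subsp l)) (f : DFull l) : diff r (diff r f) = 0 := by
  have : (diff r).comp (diff r) = (0 : DFull l →ₗ[ℚ] DFull l) := by
    apply Finsupp.lhom_ext
    intro σ a
    have h1 : (Finsupp.single σ a : DFull l) = a • Finsupp.single σ (1 : ℚ) := by
      rw [Finsupp.smul_single, smul_eq_mul, mul_one]
    simp only [LinearMap.comp_apply, LinearMap.zero_apply, h1, map_smul, diff_apply_single,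
      diff_diff_single, smul_zero]
  exact LinearMap.congr_fun this f

/-- The homotopy on basis elements. -/
def hBasis (r : LinearOrder (Subsp l)) (u v : Subsp l) (σ : Finset (Subsp l)) : DFull l :=
  if u ∈ σ ∧ v ∉ σ then
    ((-1 : ℚ) ^ pos r (insert v σ) v) • Finsupp.single (insert v σ) (1 : ℚ)
  else 0

/-- The homotopy `h : D(B) → D(B)` pairing `σ ∋ u` with `σ ∪ {v}`. -/
def hmap (r : LinearOrder (Subsp l)) (u v : Subsp l) : DFull l →ₗ[ℚ] DFull l :=
  Finsupp.lsum ℚ fun σ => LinearMap.toSpanSingleton ℚ (DFull l) (hBasis r u v σ)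

lemma hmap_apply_single (r : LinearOrder (Subsp l)) (u v : Subsp l) (σ : Finset (Subsp l)) :
    hmap r u v (Finsupp.single σ 1) = hBasis r u v σ := by
  simp [hmap]

lemma inter_insert (r : LinearOrder (Subsp l)) (v : Subsp l) (σ : Finset (Subsp l)) :
    inter (insert v σ) = v ⊓ inter σ :=
  Finset.inf_insert

lemma inter_le_of_mem {σ : Finset (Subsp l)} {u : Subsp l} (hu : u ∈ σ) : inter σ ≤ u :=
  Finset.inf_le hu

lemma inter_insert_of_le (r : LinearOrder (Subsp l)) {σ : Finset (Subsp l)} {u v : Subsp l}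
    (huv : u ≤ v) (huσ : u ∈ σ) :
    inter (insert v σ) = inter σ := by
  rw [inter_insert r]
  exact inf_eq_right.2 ((inter_le_of_mem huσ).trans huv)

lemma single_mem_Dcomp {B' : Finset (Subsp l)} {σ : Finset (Subsp l)} (h : σ ⊆ B') :
    Finsupp.single σ (1 : ℚ) ∈ Dcomp ⊤ B' (degIn ⊤ σ) :=
  Submodule.subset_span ⟨σ, h, rfl, rfl⟩

lemma key_lemma (r : LinearOrder (Subsp l)) {B : Finset (Subsp l)} {u v : Subsp l}
    (hv : v ∈ B) (huv : u < v) {σ : Finset (Subsp l)} (hσB : σ ⊆ B) :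
    Finsupp.single σ (1 : ℚ) - diff r (hmap r u v (Finsupp.single σ 1))
        - hmap r u v (diff r (Finsupp.single σ 1))
      ∈ Dcomp ⊤ (B.erase u) (degIn ⊤ σ) := by
  rw [diff_apply_single]
  by_cases huσ : u ∈ σ
  · by_cases hvσ : v ∈ σ
    · -- second case : both u and v in σ; expression is 0
      have h0 : hmap r u v (Finsupp.single σ 1) = 0 := by
        rw [hmap_apply_single, hBasis, if_neg (by tauto)]
      have hsum : hmap r u v (dBasis r σ) = Finsupp.single σ (1 : ℚ) := by
        rw [dBasis, map_sum]
        have hveq : ∀ x, hmap r u v (((-1 : ℚ) ^ pos r σ x) • Finsupp.single (σ.erase x) 1)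
            = ((-1 : ℚ) ^ pos r σ x) • hBasis r u v (σ.erase x) := by
          intro x; rw [map_smul, hmap_apply_single]
        have hvF : v ∈ σ.filter (fun x => inter (σ.erase x) = inter σ) := by
          refine Finset.mem_filter.2 ⟨hvσ, ?_⟩
          have hu' : u ∈ σ.erase v := Finset.mem_erase.2 ⟨huv.ne, huσ⟩
          have hins : σ = insert v (σ.erase v) := (Finset.insert_erase hvσ).symm
          calc inter (σ.erase v) = inter (insert v (σ.erase v)) :=
                (inter_insert_of_le r huv.le hu').symm
            _ = inter σ := by rw [← hins]
        rw [Finset.sum_eq_single_of_mem v hvF]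
        · rw [hveq, hBasis,
            if_pos ⟨Finset.mem_erase.2 ⟨huv.ne, huσ⟩, Finset.notMem_erase _ _⟩,
            Finset.insert_erase hvσ, smul_smul, ← pow_add,
            Even.neg_one_pow ⟨pos r σ v, rfl⟩, one_smul]
        · intro x _ hxv
          rw [hveq, hBasis, if_neg, smul_zero]
          rintro ⟨-, hvx⟩
          exact hvx (Finset.mem_erase.2 ⟨Ne.symm hxv, hvσ⟩)
      rw [h0, map_zero, hsum, sub_zero, sub_self]
      exact Submodule.zero_mem _
    · -- main case : u ∈ σ, v ∉ σ
      set τ := insert v σ with hτ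
      have hvτ : v ∈ τ := Finset.mem_insert_self _ _
      have huτ : u ∈ τ := Finset.mem_insert_of_mem huσ
      have hτv : τ.erase v = σ := Finset.erase_insert hvσ
      have hinterτ : inter τ = inter σ := by rw [hτ]; exact inter_insert_of_le r huv.le huσ
      set Fτ := τ.filter (fun x => inter (τ.erase x) = inter τ) with hFτ
      set Fσ := σ.filter (fun x => inter (σ.erase x) = inter σ) with hFσ
      set a : Subsp l → DFull l := fun x =>
        (((-1 : ℚ) ^ pos r τ v) * ((-1 : ℚ) ^ pos r τ x)) •
          Finsupp.single (τ.erase x) (1 : ℚ) with ha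
      set b : Subsp l → DFull l := fun x =>
        (((-1 : ℚ) ^ pos r σ x) * ((-1 : ℚ) ^ pos r (τ.erase x) v)) •
          Finsupp.single (τ.erase x) (1 : ℚ) with hb
      have hD : diff r (hmap r u v (Finsupp.single σ 1)) = ∑ x ∈ Fτ, a x := by
        rw [hmap_apply_single, hBasis, if_pos ⟨huσ, hvσ⟩, map_smul, diff_apply_single, dBasis,
          Finset.smul_sum]
        exact Finset.sum_congr rfl fun x _ => by rw [smul_smul]
      have hgu : ((-1 : ℚ) ^ pos r σ u) • hBasis r u v (σ.erase u) = 0 := by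
        rw [hBasis, if_neg, smul_zero]
        rintro ⟨hcon, -⟩
        exact Finset.notMem_erase _ _ hcon
      have hH : hmap r u v (dBasis r σ) = ∑ x ∈ Fσ.erase u, b x := by
        rw [dBasis, map_sum]
        have hcongr : ∀ x, hmap r u v (((-1 : ℚ) ^ pos r σ x) • Finsupp.single (σ.erase x) 1)
            = ((-1 : ℚ) ^ pos r σ x) • hBasis r u v (σ.erase x) := by
          intro x; rw [map_smul, hmap_apply_single]
        rw [Finset.sum_congr rfl fun x _ => hcongr x,
          ← Finset.sum_erase (a := u) _ (by exact hgu)]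
        refine Finset.sum_congr rfl ?_
        intro x hx
        have hxu : x ≠ u := (Finset.mem_erase.1 hx).1
        have hxσ : x ∈ σ := Finset.mem_filter.1 (Finset.mem_erase.1 hx).2 |>.1
        have hxv : v ≠ x := fun h => hvσ (h ▸ hxσ)
        have hins : insert v (σ.erase x) = τ.erase x := (Finset.erase_insert_of_ne hxv).symm
        rw [hBasis, if_pos ⟨Finset.mem_erase.2 ⟨Ne.symm hxu, huσ⟩,
          fun h => hvσ (Finset.mem_of_mem_erase h)⟩]
        · rw [hins, smul_smul]
      have hvFτ : v ∈ Fτ := Finset.mem_filter.2 ⟨hvτ, by rw [hτv, hinterτ]⟩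
      have hav : a v = Finsupp.single σ (1 : ℚ) := by
        rw [ha]
        simp only
        rw [hτv, ← pow_add, Even.neg_one_pow ⟨pos r τ v, rfl⟩, one_smul]
      have hSeq : (Fτ.erase v).erase u = Fσ.erase u := by
        ext x
        simp only [hFτ, hFσ, Finset.mem_erase, Finset.mem_filter]
        constructor
        · rintro ⟨hxu, hxv, hxτ, hcx⟩
          have hxσ : x ∈ σ := by
            rcases Finset.mem_insert.1 (hτ ▸ hxτ) with h | h
            · exact absurd h hxv
            · exact h
          have hu' : u ∈ σ.erase x := Finset.mem_erase.2 ⟨Ne.symm hxu, huσ⟩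
          have hvx : v ≠ x := fun h => hvσ (h ▸ hxσ)
          have hτx : τ.erase x = insert v (σ.erase x) := by
            rw [hτ]; exact Finset.erase_insert_of_ne hvx
          refine ⟨hxu, hxσ, ?_⟩
          rw [hτx, inter_insert_of_le r huv.le hu', hinterτ] at hcx
          exact hcx
        · rintro ⟨hxu, hxσ, hcx⟩
          have hvx : v ≠ x := fun h => hvσ (h ▸ hxσ)
          have hu' : u ∈ σ.erase x := Finset.mem_erase.2 ⟨Ne.symm hxu, huσ⟩
          have hτx : τ.erase x = insert v (σ.erase x) := by
            rw [hτ]; exact Finset.erase_insert_of_ne hvx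
          refine ⟨hxu, hvx.symm, hτ ▸ Finset.mem_insert_of_mem hxσ, ?_⟩
          rw [hτx, inter_insert_of_le r huv.le hu', hinterτ]
          exact hcx
      have hcancel : ∀ x ∈ Fσ.erase u, a x + b x = 0 := by
        intro x hx
        have hxu : x ≠ u := (Finset.mem_erase.1 hx).1
        have hxσ : x ∈ σ := Finset.mem_filter.1 (Finset.mem_erase.1 hx).2 |>.1
        have hxτ : x ∈ τ := Finset.mem_insert_of_mem hxσ
        have hxv : x ≠ v := fun h => hvσ (h ▸ hxσ)
        have hps := pos_sum_erase r hvτ hxτ (Ne.symm hxv)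
        rw [hτv] at hps
        have hodd : Odd ((pos r τ v + pos r τ x) + (pos r σ x + pos r (τ.erase x) v)) :=
          ⟨pos r σ x + pos r (τ.erase x) v, by omega⟩
        have hsg : ((-1 : ℚ) ^ pos r τ v) * ((-1 : ℚ) ^ pos r τ x)
            = -(((-1 : ℚ) ^ pos r σ x) * ((-1 : ℚ) ^ pos r (τ.erase x) v)) := by
          rw [← pow_add, ← pow_add]
          exact neg_one_pow_helper hodd
        rw [ha, hb]
        simp only
        rw [hsg, ← add_smul, neg_add_cancel, zero_smul]
      have hzero : (∑ x ∈ Fσ.erase u, a x) + (∑ x ∈ Fσ.erase u, b x) = 0 := by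
        rw [← Finset.sum_add_distrib]
        exact Finset.sum_eq_zero hcancel
      by_cases hcu : inter (τ.erase u) = inter τ
      · have huF : u ∈ Fτ.erase v := Finset.mem_erase.2 ⟨huv.ne, Finset.mem_filter.2 ⟨huτ, hcu⟩⟩
        have hsplit : ∑ x ∈ Fτ, a x
            = a v + (a u + ∑ x ∈ Fσ.erase u, a x) := by
          rw [← Finset.add_sum_erase _ a hvFτ, ← Finset.add_sum_erase _ a huF, hSeq]
        have hexpr : Finsupp.single σ (1 : ℚ) - diff r (hmap r u v (Finsupp.single σ 1))
            - hmap r u v (dBasis r σ) = -(a u) := by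
          rw [hD, hH, hsplit, hav]
          have : Finsupp.single σ (1 : ℚ)
              - (Finsupp.single σ (1 : ℚ) + (a u + ∑ x ∈ Fσ.erase u, a x))
              - ∑ x ∈ Fσ.erase u, b x
              = -(a u) - ((∑ x ∈ Fσ.erase u, a x) + ∑ x ∈ Fσ.erase u, b x) := by abel
          rw [this, hzero, sub_zero]
        rw [hexpr]
        refine Submodule.neg_mem _ ?_
        refine Submodule.smul_mem _ _ ?_
        have hsub : τ.erase u ⊆ B.erase u := by
          intro x hx
          obtain ⟨hx1, hx2⟩ := Finset.mem_erase.1 hx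
          refine Finset.mem_erase.2 ⟨hx1, ?_⟩
          rcases Finset.mem_insert.1 hx2 with h | h
          · exact h ▸ hv
          · exact hσB h
        have hdeg : degIn ⊤ (τ.erase u) = degIn ⊤ σ := by
          have hcard : (τ.erase u).card = σ.card := by
            rw [Finset.card_erase_of_mem huτ, Finset.card_insert_of_notMem hvσ]
            omega
          rw [degIn, degIn, hcu, hinterτ, hcard]
        exact hdeg ▸ single_mem_Dcomp hsub
      · have huF : u ∉ Fτ.erase v := by
          intro h
          exact hcu (Finset.mem_filter.1 (Finset.mem_erase.1 h).2).2
        have hsplit : ∑ x ∈ Fτ, a x = a v + ∑ x ∈ Fσ.erase u, a x := by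
          rw [← Finset.add_sum_erase _ a hvFτ, ← hSeq, Finset.erase_eq_of_notMem huF]
        have hexpr : Finsupp.single σ (1 : ℚ) - diff r (hmap r u v (Finsupp.single σ 1))
            - hmap r u v (dBasis r σ) = 0 := by
          rw [hD, hH, hsplit, hav]
          have : Finsupp.single σ (1 : ℚ)
              - (Finsupp.single σ (1 : ℚ) + ∑ x ∈ Fσ.erase u, a x)
              - ∑ x ∈ Fσ.erase u, b x
              = -((∑ x ∈ Fσ.erase u, a x) + ∑ x ∈ Fσ.erase u, b x) := by abel
          rw [this, hzero, neg_zero]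
        rw [hexpr]
        exact Submodule.zero_mem _
  · -- first case : u ∉ σ; expression is single σ 1
    have h0 : hmap r u v (Finsupp.single σ 1) = 0 := by
      rw [hmap_apply_single, hBasis, if_neg (by tauto)]
    have h1 : hmap r u v (dBasis r σ) = 0 := by
      rw [dBasis, map_sum]
      refine Finset.sum_eq_zero ?_
      intro x _
      rw [map_smul, hmap_apply_single, hBasis, if_neg, smul_zero]
      rintro ⟨hcon, -⟩
      exact huσ (Finset.mem_of_mem_erase hcon)
    rw [h0, map_zero, h1, sub_zero, sub_zero]
    exact single_mem_Dcomp fun x hx => Finset.mem_erase.2 ⟨fun h => huσ (h ▸ hx), hσB hx⟩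

/-- The operator `P = id - d∘h - h∘d`. -/
def Pmap (r : LinearOrder (Subsp l)) (u v : Subsp l) : DFull l →ₗ[ℚ] DFull l :=
  LinearMap.id - (diff r).comp (hmap r u v) - (hmap r u v).comp (diff r)

lemma Pmap_apply (r : LinearOrder (Subsp l)) (u v : Subsp l) (f : DFull l) :
    Pmap r u v f = f - diff r (hmap r u v f) - hmap r u v (diff r f) := rfl

lemma Pmap_comm (r : LinearOrder (Subsp l)) (u v : Subsp l) (f : DFull l) :
    diff r (Pmap r u v f) = Pmap r u v (diff r f) := by
  rw [Pmap_apply, Pmap_apply, map_sub, map_sub, diff_diff r (hmap r u v f),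
    diff_diff r f, map_zero, sub_zero, sub_zero]

lemma Pmap_mem (r : LinearOrder (Subsp l)) {B : Finset (Subsp l)} {u v : Subsp l}
    (hv : v ∈ B) (huv : u < v) {q : ℤ} {f : DFull l} (hf : f ∈ Dcomp ⊤ B q) :
    Pmap r u v f ∈ Dcomp ⊤ (B.erase u) q := by
  induction hf using Submodule.span_induction with
  | mem f hfmem =>
      obtain ⟨σ, hσB, hdeg, rfl⟩ := hfmem
      rw [Pmap_apply]
      exact hdeg ▸ key_lemma r hv huv hσB
  | zero => simp only [map_zero]; exact Submodule.zero_mem _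
  | add f g _ _ hf hg => rw [map_add]; exact Submodule.add_mem _ hf hg
  | smul c f _ hf => rw [map_smul]; exact Submodule.smul_mem _ c hf

lemma hmap_mem (r : LinearOrder (Subsp l)) {B : Finset (Subsp l)} {u v : Subsp l}
    (hv : v ∈ B) (huv : u < v) {q : ℤ} {f : DFull l} (hf : f ∈ Dcomp ⊤ B q) :
    hmap r u v f ∈ Dcomp ⊤ B (q - 1) := by
  induction hf using Submodule.span_induction with
  | mem f hfmem =>
      obtain ⟨σ, hσB, hdeg, rfl⟩ := hfmem
      rw [hmap_apply_single, hBasis]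
      by_cases hc : u ∈ σ ∧ v ∉ σ
      · rw [if_pos hc]
        refine Submodule.smul_mem _ _ (Submodule.subset_span ?_)
        refine ⟨insert v σ, Finset.insert_subset hv hσB, ?_, rfl⟩
        rw [← hdeg, degIn, degIn, inter_insert_of_le r huv.le hc.1,
          Finset.card_insert_of_notMem hc.2]
        push_cast
        ring
      · rw [if_neg hc]; exact Submodule.zero_mem _
  | zero => simp only [map_zero]; exact Submodule.zero_mem _
  | add f g _ _ hf hg => rw [map_add]; exact Submodule.add_mem _ hf hg
  | smul c f _ hf => rw [map_smul]; exact Submodule.smul_mem _ c hf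

lemma hmap_zero (r : LinearOrder (Subsp l)) {B : Finset (Subsp l)} {u v : Subsp l}
    {q : ℤ} {f : DFull l} (hf : f ∈ Dcomp ⊤ (B.erase u) q) : hmap r u v f = 0 := by
  induction hf using Submodule.span_induction with
  | mem f hfmem =>
      obtain ⟨σ, hσB, hdeg, rfl⟩ := hfmem
      rw [hmap_apply_single, hBasis, if_neg]
      rintro ⟨hcon, -⟩
      exact Finset.notMem_erase u B (hσB hcon)
  | zero => simp
  | add f g _ _ hf hg => rw [map_add, hf, hg, add_zero]
  | smul c f _ hf => rw [map_smul, hf, smul_zero]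

end AuxProof

/-- Proposition 2.1 of the paper. Let `B` be a finite set of
linear subspaces of `ℂ^l` containing two subspaces `u ⊊ v`, and `B' = B ∖ {u}`.
Then the inclusion of cochain complexes `D(B') ↪ D(B)` is a quasi-isomorphism:
it induces an isomorphism `H^q(D(B')) ≅ H^q(D(B))` in every degree `q`. -/
theorem statement0 {l : ℕ} (r : LinearOrder (Subsp l)) (B : Finset (Subsp l))
    (u v : Subsp l) (hu : u ∈ B) (hv : v ∈ B) (huv : u < v) :
    ∀ q : ℤ, Function.Bijective (inducedMap r ⊤ (eraseSubset B u) q) := by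
  intro q
  have einst : (fun (a b : Subsp l) => Classical.propDecidable (a = b))
      = (fun a b : Subsp l => (inferInstance : Decidable (a = b))) := by
    funext a b; exact Subsingleton.elim _ _
  have hBB : (@Finset.erase (Subsp l) (fun a b => Classical.propDecidable (a = b)) B u)
      = B.erase u := by rw [einst]
  constructor
  · -- injectivity
    rw [← LinearMap.ker_eq_bot, eq_bot_iff]
    intro x hx
    obtain ⟨z, rfl⟩ := Submodule.Quotient.mk_surjective _ x
    rw [LinearMap.mem_ker, inducedMap, Submodule.mapQ_apply,
      Submodule.Quotient.mk_eq_zero, Submodule.mem_comap] at hx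
    have hxb : (z : DFull l) ∈ cobounds r ⊤ B q := hx
    have hDc : Dcomp (⊤ : Subsp l)
        (@Finset.erase (Subsp l) (fun a b => Classical.propDecidable (a = b)) B u) q
        = Dcomp ⊤ (B.erase u) q := by rw [hBB]
    have hco : cobounds r ⊤
        (@Finset.erase (Subsp l) (fun a b => Classical.propDecidable (a = b)) B u) q
        = cobounds r ⊤ (B.erase u) q := by rw [hBB]
    have hz1 : (z : DFull l) ∈ Dcomp ⊤ (B.erase u) q := hDc ▸ z.2.1
    have hz2 : diff r (z : DFull l) = 0 := z.2.2
    rw [Submodule.mem_bot, Submodule.Quotient.mk_eq_zero, Submodule.mem_comap]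
    rw [cobounds, Submodule.mem_inf] at hxb
    obtain ⟨-, hmapmem⟩ := hxb
    rw [Submodule.mem_map] at hmapmem
    obtain ⟨w, hw, hdw⟩ := hmapmem
    have hPw : Pmap r u v w ∈ Dcomp ⊤ (B.erase u) (q - 1) := Pmap_mem r hv huv hw
    have hdPw : diff r (Pmap r u v w) = (z : DFull l) := by
      rw [Pmap_comm, hdw, Pmap_apply, hz2, map_zero, sub_zero, hmap_zero r hz1, map_zero,
        sub_zero]
    show (z : DFull l) ∈ cobounds r ⊤ (B.erase u) q
    rw [cobounds, Submodule.mem_inf]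
    exact ⟨hz1, Submodule.mem_map.2 ⟨Pmap r u v w, hPw, hdPw⟩⟩
  · -- surjectivity
    intro y
    obtain ⟨z, rfl⟩ := Submodule.Quotient.mk_surjective _ y
    have hz1 : (z : DFull l) ∈ Dcomp ⊤ B q := z.2.1
    have hz2 : diff r (z : DFull l) = 0 := z.2.2
    have hP1 : Pmap r u v (z : DFull l) ∈ Dcomp ⊤ (B.erase u) q := Pmap_mem r hv huv hz1
    rw [← hBB] at hP1
    have hP2 : diff r (Pmap r u v (z : DFull l)) = 0 := by
      rw [Pmap_comm, hz2, map_zero]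
    refine ⟨Submodule.Quotient.mk
      ⟨Pmap r u v (z : DFull l), Submodule.mem_inf.2 ⟨hP1, LinearMap.mem_ker.2 hP2⟩⟩, ?_⟩
    rw [inducedMap, Submodule.mapQ_apply, Submodule.Quotient.eq, Submodule.mem_comap]
    show Pmap r u v (z : DFull l) - (z : DFull l) ∈ cobounds r ⊤ B q
    have hdiff : Pmap r u v (z : DFull l) - (z : DFull l)
        = diff r (-(hmap r u v (z : DFull l))) := by
      rw [Pmap_apply, hz2, map_zero, sub_zero, map_neg]
      abel
    rw [cobounds, Submodule.mem_inf]
    constructor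
    · exact Submodule.sub_mem _ (Dcomp_mono ⊤ (eraseSubset B u) q hP1) hz1
    · exact Submodule.mem_map.2 ⟨-(hmap r u v (z : DFull l)),
        Submodule.neg_mem _ (hmap_mem r hv huv hz1), hdiff.symm⟩
end

section
/- Let A be a subspace arrangement in ℂ^l, x₀ ∈ A, and A' = A \ {x₀}. Define the linear map φ : D(A) → D(Ã'') on basis elements by: φ(σ) = 0 if x₀ ∉ σ, or if x₀ ∈ σ and σ contains two distinct elements y, z of A' with x₀ ∩ y = x₀ ∩ z; and φ({x₀, x_{i_1}, …, x_{i_r}}) = (−1)^r {x₀ ∩ x_{i_1}, …, x₀ ∩ x_{i_r}} otherwise (in particular φ({x₀}) = ∅). Then φ commutes with the differentials: φ∘d = d∘φ. -/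
/-!
Formalization of the Yuzvinsky–Feichtner rational model `D(B)` of the
complement of an arrangement of linear subspaces of `ℂ^l`, together with the
deletion/restriction constructions of the paper.
-/

open scoped Classical

section Statement2Aux

private lemma rlt_trich {α : Type*} (r : LinearOrder α) (a b : α) :
    r.lt a b ∨ a = b ∨ r.lt b a := @lt_trichotomy _ r a b

private lemma rlt_asymm {α : Type*} (r : LinearOrder α) {a b : α} (h : r.lt a b) :
    ¬ r.lt b a := @lt_asymm _ r.toPartialOrder.toPreorder _ _ h

private lemma rlt_trans {α : Type*} (r : LinearOrder α) {a b c : α}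
    (h1 : r.lt a b) (h2 : r.lt b c) : r.lt a c :=
  @lt_trans _ r.toPartialOrder.toPreorder _ _ _ h1 h2

private lemma rlt_irrefl {α : Type*} (r : LinearOrder α) (a : α) : ¬ r.lt a a :=
  @lt_irrefl _ r.toPartialOrder.toPreorder a

private lemma rle_of_lt {α : Type*} (r : LinearOrder α) {a b : α} (h : r.lt a b) :
    r.le a b := @le_of_lt _ r.toPartialOrder.toPreorder _ _ h

private lemma rlt_ne {α : Type*} (r : LinearOrder α) {a b : α} (h : r.lt a b) :
    a ≠ b := @ne_of_lt _ r.toPartialOrder.toPreorder _ _ h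

private lemma s2_phiBasis_zero {l : ℕ} (x₀ : Subsp l) (σ : Finset (Subsp l))
    (h : x₀ ∉ σ) : phiBasis x₀ σ = 0 := by
  simp only [phiBasis]
  rw [if_neg]
  rintro ⟨h', -⟩; exact h h'

private lemma s2_phiBasis_zero_pair {l : ℕ} (x₀ : Subsp l) (σ : Finset (Subsp l))
    {y z : Subsp l} (hy : y ∈ σ) (hz : z ∈ σ) (hyx : y ≠ x₀) (hzx : z ≠ x₀)
    (hyz : y ≠ z) (h : x₀ ⊓ y = x₀ ⊓ z) : phiBasis x₀ σ = 0 := by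
  simp only [phiBasis]
  rw [if_neg]
  rintro ⟨-, hI⟩
  exact hyz (hI (Finset.mem_coe.2 (Finset.mem_erase.2 ⟨hyx, hy⟩))
    (Finset.mem_coe.2 (Finset.mem_erase.2 ⟨hzx, hz⟩)) h)

private lemma s2_phiBasis_eq {l : ℕ} (x₀ : Subsp l) (σ : Finset (Subsp l)) (hx : x₀ ∈ σ)
    (hinj : ∀ y ∈ σ, y ≠ x₀ → ∀ z ∈ σ, z ≠ x₀ → x₀ ⊓ y = x₀ ⊓ z → y = z)
    (T : Finset (Subsp l)) (hT : ∀ w, w ∈ T ↔ ∃ y, y ∈ σ ∧ y ≠ x₀ ∧ x₀ ⊓ y = w)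
    (n : ℕ) (hn : σ.card = n + 1) :
    phiBasis x₀ σ = ((-1:ℚ)^n) • Finsupp.single T (1:ℚ) := by
  have hTeq : T = (σ.erase x₀).image (fun y => x₀ ⊓ y) := by
    ext w
    rw [hT w]
    simp only [Finset.mem_image, Finset.mem_erase]
    constructor
    · rintro ⟨y, hy, hyx, rfl⟩; exact ⟨y, ⟨hyx, hy⟩, rfl⟩
    · rintro ⟨y, ⟨hyx, hy⟩, rfl⟩; exact ⟨y, hy, hyx, rfl⟩
  have hI : Set.InjOn (fun y => x₀ ⊓ y) ↑(σ.erase x₀) := by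
    intro a ha b hb hab
    have ha' := Finset.mem_erase.1 (Finset.mem_coe.1 ha)
    have hb' := Finset.mem_erase.1 (Finset.mem_coe.1 hb)
    exact hinj a ha'.2 ha'.1 b hb'.2 hb'.1 hab
  simp only [phiBasis]
  rw [if_pos ⟨hx, hI⟩, hTeq, hn, Nat.add_sub_cancel]

private lemma s2_key {l : ℕ} (r : LinearOrder (Subsp l)) (A : Finset (Subsp l))
    (harr : IsArrangement A) (x₀ : Subsp l) (hx₀ : x₀ ∈ A) (hord : GoodOrder r A x₀)
    (σ : Finset (Subsp l)) (hσ : σ ⊆ A) :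
    phi x₀ (dBasis r σ) = diff r (phiBasis x₀ σ) := by
  have hL : phi x₀ (dBasis r σ)
      = ∑ x ∈ σ.filter (fun x => inter (σ.erase x) = inter σ),
          ((-1:ℚ) ^ pos r σ x) • phiBasis x₀ (σ.erase x) := by
    rw [dBasis, map_sum]
    exact Finset.sum_congr rfl fun x _ => by rw [map_smul, phi_apply_single]
  by_cases hx0σ : x₀ ∈ σ
  · -- x₀ ∈ σ
    have hσ'A : σ.erase x₀ ⊆ A.erase x₀ := Finset.erase_subset_erase x₀ hσ
    have hlt0 : ∀ y ∈ σ.erase x₀, r.lt x₀ y := fun y hy => hord.1 y (hσ'A hy)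
    have hy0 : ∀ y ∈ σ.erase x₀, y ≠ x₀ := fun y hy => Finset.ne_of_mem_erase hy
    have hx0mem : ∀ y ∈ σ.erase x₀, x₀ ∈ σ.erase y :=
      fun y hy => Finset.mem_erase.2 ⟨Ne.symm (hy0 y hy), hx0σ⟩
    have herase2 : ∀ y : Subsp l, (σ.erase y).erase x₀ = (σ.erase x₀).erase y :=
      fun y => Finset.erase_right_comm
    have hIE : ∀ (s : Finset (Subsp l)) (x : Subsp l), x ∈ s →
        inter s = x ⊓ inter (s.erase x) := by
      intro s x hx
      apply le_antisymm
      · exact le_inf (Finset.inf_le hx) (Finset.inf_mono (Finset.erase_subset _ _))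
      · refine Finset.le_inf fun b hb => ?_
        by_cases hbx : b = x
        · subst hbx; exact inf_le_left
        · exact inf_le_right.trans (Finset.inf_le (Finset.mem_erase.2 ⟨hbx, hb⟩))
    have hcond0 : ∀ y ∈ σ.erase x₀, ∀ z ∈ σ.erase x₀, z ≠ y → x₀ ⊓ y = x₀ ⊓ z →
        inter (σ.erase y) = inter σ := by
      intro y hy z hz hzy hmyz
      have hyσ : y ∈ σ := Finset.mem_of_mem_erase hy
      have hzey : z ∈ σ.erase y := Finset.mem_erase.2 ⟨hzy, Finset.mem_of_mem_erase hz⟩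
      have h1 : inter (σ.erase y) ≤ y := by
        have h2 : inter (σ.erase y) ≤ x₀ ⊓ z :=
          le_inf (Finset.inf_le (hx0mem y hy)) (Finset.inf_le hzey)
        rw [← hmyz] at h2
        exact h2.trans inf_le_right
      rw [hIE σ y hyσ]
      exact (inf_eq_right.2 h1).symm
    have hphiE : ∀ y ∈ σ.erase x₀,
        Set.InjOn (fun w => x₀ ⊓ w) ↑((σ.erase x₀).erase y) →
        phiBasis x₀ (σ.erase y)
          = ((-1:ℚ)^((σ.erase x₀).card - 1)) •
            Finsupp.single (((σ.erase x₀).erase y).image (fun w => x₀ ⊓ w)) (1:ℚ) := by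
      intro y hy hI
      have hn : (σ.erase y).card = ((σ.erase x₀).card - 1) + 1 := by
        have h1 := Finset.card_erase_of_mem (Finset.mem_of_mem_erase hy)
        have h2 := Finset.card_erase_of_mem hx0σ
        have h3 : 1 ≤ (σ.erase x₀).card := Finset.card_pos.2 ⟨y, hy⟩
        omega
      refine s2_phiBasis_eq x₀ (σ.erase y) (hx0mem y hy) ?_ _ ?_ _ hn
      · intro t ht htx z hz hzx htz
        have ht' : t ∈ (σ.erase x₀).erase y := Finset.mem_erase.2
          ⟨Finset.ne_of_mem_erase ht, Finset.mem_erase.2 ⟨htx, Finset.mem_of_mem_erase ht⟩⟩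
        have hz' : z ∈ (σ.erase x₀).erase y := Finset.mem_erase.2
          ⟨Finset.ne_of_mem_erase hz, Finset.mem_erase.2 ⟨hzx, Finset.mem_of_mem_erase hz⟩⟩
        exact hI (Finset.mem_coe.2 ht') (Finset.mem_coe.2 hz') htz
      · intro w
        simp only [Finset.mem_image]
        constructor
        · rintro ⟨t, ht, rfl⟩
          have h1 := Finset.mem_erase.1 ht
          have h2 := Finset.mem_erase.1 h1.2
          exact ⟨t, Finset.mem_erase.2 ⟨h1.1, h2.2⟩, h2.1, rfl⟩
        · rintro ⟨t, ht, htx, rfl⟩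
          have h1 := Finset.mem_erase.1 ht
          exact ⟨t, Finset.mem_erase.2 ⟨h1.1, Finset.mem_erase.2 ⟨htx, h1.2⟩⟩, rfl⟩
    have hphi0 : ∀ x : Subsp l,
        ¬ Set.InjOn (fun w => x₀ ⊓ w) ↑((σ.erase x₀).erase x) →
        phiBasis x₀ (σ.erase x) = 0 := by
      intro x hni
      rw [Set.InjOn] at hni
      push_neg at hni
      obtain ⟨a, ha, b, hb, hab, hne⟩ := hni
      have ha' := Finset.mem_erase.1 (Finset.mem_coe.1 ha)
      have hb' := Finset.mem_erase.1 (Finset.mem_coe.1 hb)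
      have ha'' := Finset.mem_erase.1 ha'.2
      have hb'' := Finset.mem_erase.1 hb'.2
      exact s2_phiBasis_zero_pair x₀ (σ.erase x)
        (Finset.mem_erase.2 ⟨ha'.1, ha''.2⟩) (Finset.mem_erase.2 ⟨hb'.1, hb''.2⟩)
        ha''.1 hb''.1 hne hab
    have hphix0 : phiBasis x₀ (σ.erase x₀) = 0 :=
      s2_phiBasis_zero x₀ _ (Finset.notMem_erase x₀ σ)
    have hdrop : (∑ x ∈ σ.filter (fun x => inter (σ.erase x) = inter σ),
          ((-1:ℚ) ^ pos r σ x) • phiBasis x₀ (σ.erase x))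
        = ∑ x ∈ (σ.erase x₀).filter (fun x => inter (σ.erase x) = inter σ),
          ((-1:ℚ) ^ pos r σ x) • phiBasis x₀ (σ.erase x) := by
      rw [Finset.filter_erase]
      exact (Finset.sum_erase _ (by rw [hphix0, smul_zero])).symm
    have hmono : ∀ y ∈ σ.erase x₀, ∀ z ∈ σ.erase x₀, r.lt y z → x₀ ⊓ y ≠ x₀ ⊓ z →
        r.lt (x₀ ⊓ y) (x₀ ⊓ z) := fun y hy z hz => hord.2.2 y (hσ'A hy) z (hσ'A hz)
    by_cases hinj : Set.InjOn (fun w => x₀ ⊓ w) ↑(σ.erase x₀)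
    · -- injective case
      have hinj' : ∀ y ∈ σ.erase x₀, ∀ z ∈ σ.erase x₀, x₀ ⊓ y = x₀ ⊓ z → y = z :=
        fun y hy z hz h => hinj (Finset.mem_coe.2 hy) (Finset.mem_coe.2 hz) h
      have hltiff : ∀ y ∈ σ.erase x₀, ∀ z ∈ σ.erase x₀,
          (r.lt z y ↔ r.lt (x₀ ⊓ z) (x₀ ⊓ y)) := by
        intro y hy z hz
        constructor
        · intro h
          exact hmono z hz y hy h (fun he => rlt_ne r h (hinj' z hz y hy he))
        · intro h
          rcases rlt_trich r z y with h' | h' | h'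
          · exact h'
          · exfalso; rw [h'] at h; exact rlt_irrefl r _ h
          · exact absurd (hmono y hy z hz h'
              (fun he => rlt_ne r h' (hinj' y hy z hz he))) (rlt_asymm r h)
      have hinfm : ∀ s : Finset (Subsp l), s.Nonempty →
          inter (s.image (fun w => x₀ ⊓ w)) = x₀ ⊓ inter s := by
        intro s hs
        obtain ⟨a, ha⟩ := hs
        simp only [inter, Finset.inf_image]
        apply le_antisymm
        · refine le_inf ((Finset.inf_le ha).trans ?_) (Finset.le_inf fun b hb =>
            (Finset.inf_le hb).trans ?_)
          · exact inf_le_left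
          · exact inf_le_right
        · exact Finset.le_inf fun b hb => inf_le_inf_left x₀ (Finset.inf_le hb)
      have hTE : ∀ y ∈ σ.erase x₀,
          ((σ.erase x₀).image (fun w => x₀ ⊓ w)).erase (x₀ ⊓ y)
            = ((σ.erase x₀).erase y).image (fun w => x₀ ⊓ w) := by
        intro y hy
        ext w
        constructor
        · intro hw
          obtain ⟨hwne, hw2⟩ := Finset.mem_erase.1 hw
          obtain ⟨t, ht, rfl⟩ := Finset.mem_image.1 hw2
          exact Finset.mem_image.2 ⟨t, Finset.mem_erase.2 ⟨fun h => hwne (by rw [h]), ht⟩, rfl⟩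
        · intro hw
          obtain ⟨t, ht, rfl⟩ := Finset.mem_image.1 hw
          obtain ⟨hty, ht2⟩ := Finset.mem_erase.1 ht
          exact Finset.mem_erase.2 ⟨fun h => hty (hinj' t ht2 y hy h),
            Finset.mem_image.2 ⟨t, ht2, rfl⟩⟩
      have hcondiff : ∀ y ∈ σ.erase x₀,
          ((inter (σ.erase y) = inter σ) ↔
           (inter ((((σ.erase x₀).image (fun w => x₀ ⊓ w))).erase (x₀ ⊓ y))
              = inter ((σ.erase x₀).image (fun w => x₀ ⊓ w)))) := by
        intro y hy
        have e1 : inter (σ.erase y) = x₀ ⊓ inter ((σ.erase x₀).erase y) := by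
          rw [hIE (σ.erase y) x₀ (hx0mem y hy), herase2 y]
        have e2 : inter σ = x₀ ⊓ inter (σ.erase x₀) := hIE σ x₀ hx0σ
        rw [hTE y hy, e1, e2]
        rcases Finset.eq_empty_or_nonempty ((σ.erase x₀).erase y) with he | hne
        · have hy1 : σ.erase x₀ = {y} := by
            rcases (Finset.erase_eq_empty_iff _ _).1 he with h | h
            · exact absurd hy (h ▸ Finset.notMem_empty y)
            · exact h
          rw [he, hy1]
          have hyA : y ∈ A := hσ (Finset.mem_of_mem_erase hy)
          have hyx0 : y ≠ x₀ := hy0 y hy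
          constructor
          · intro h
            exfalso
            simp only [inter, Finset.inf_empty, Finset.inf_singleton, inf_top_eq, id] at h
            exact hyx0 (harr x₀ hx₀ y hyA (by rw [h]; exact inf_le_right)).symm
          · intro h
            exfalso
            simp only [Finset.image_empty, Finset.image_singleton, inter,
              Finset.inf_empty, Finset.inf_singleton, id] at h
            have hx0top : x₀ = ⊤ := top_unique (h.le.trans inf_le_left)
            have hytop : y = ⊤ := top_unique (h.le.trans inf_le_right)
            exact hyx0 (hytop.trans hx0top.symm)
        · rw [hinfm _ hne, hinfm _ ⟨y, hy⟩]
      have hfT : ((σ.erase x₀).image (fun w => x₀ ⊓ w)).filter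
            (fun w => inter ((((σ.erase x₀).image (fun w => x₀ ⊓ w))).erase w)
              = inter ((σ.erase x₀).image (fun w => x₀ ⊓ w)))
          = ((σ.erase x₀).filter (fun y => inter (σ.erase y) = inter σ)).image
              (fun w => x₀ ⊓ w) := by
        ext w
        simp only [Finset.mem_filter, Finset.mem_image]
        constructor
        · rintro ⟨⟨y, hy, rfl⟩, hw⟩
          exact ⟨y, ⟨hy, (hcondiff y hy).2 hw⟩, rfl⟩
        · rintro ⟨y, ⟨hy, hc⟩, rfl⟩
          exact ⟨⟨y, hy, rfl⟩, (hcondiff y hy).1 hc⟩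
      have hposT : ∀ y ∈ σ.erase x₀,
          pos r σ y = pos r ((σ.erase x₀).image (fun w => x₀ ⊓ w)) (x₀ ⊓ y) + 1 := by
        intro y hy
        have hf1 : σ.filter (fun w => r.lt w y)
            = insert x₀ ((σ.erase x₀).filter (fun w => r.lt w y)) := by
          ext w
          simp only [Finset.mem_filter, Finset.mem_insert, Finset.mem_erase]
          constructor
          · rintro ⟨hwσ, hwy⟩
            by_cases hw0 : w = x₀
            · exact Or.inl hw0
            · exact Or.inr ⟨⟨hw0, hwσ⟩, hwy⟩
          · rintro (rfl | ⟨⟨-, hwσ⟩, hwy⟩)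
            · exact ⟨hx0σ, hlt0 y hy⟩
            · exact ⟨hwσ, hwy⟩
        have hf2 : ((σ.erase x₀).image (fun w => x₀ ⊓ w)).filter (fun w => r.lt w (x₀ ⊓ y))
            = ((σ.erase x₀).filter (fun z => r.lt z y)).image (fun w => x₀ ⊓ w) := by
          ext w
          simp only [Finset.mem_filter, Finset.mem_image]
          constructor
          · rintro ⟨⟨z, hz, rfl⟩, hw⟩
            exact ⟨z, ⟨hz, (hltiff y hy z hz).2 hw⟩, rfl⟩
          · rintro ⟨z, ⟨hz, hzy⟩, rfl⟩
            exact ⟨⟨z, hz, rfl⟩, (hltiff y hy z hz).1 hzy⟩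
        have hc2 : (((σ.erase x₀).filter (fun z => r.lt z y)).image (fun w => x₀ ⊓ w)).card
            = ((σ.erase x₀).filter (fun z => r.lt z y)).card :=
          Finset.card_image_of_injOn (hinj.mono (by
            intro t ht
            exact Finset.mem_coe.2 (Finset.mem_of_mem_filter _ (Finset.mem_coe.1 ht))))
        have hnot : x₀ ∉ (σ.erase x₀).filter (fun w => r.lt w y) :=
          fun hmem => Finset.notMem_erase x₀ σ (Finset.mem_of_mem_filter _ hmem)
        simp only [pos]
        rw [hf1, hf2, hc2, Finset.card_insert_of_notMem hnot]
      have hphiσ : phiBasis x₀ σ = ((-1:ℚ)^(σ.card - 1)) •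
          Finsupp.single ((σ.erase x₀).image (fun w => x₀ ⊓ w)) (1:ℚ) := by
        have hn : σ.card = (σ.card - 1) + 1 := by
          have h1 : 1 ≤ σ.card := Finset.card_pos.2 ⟨x₀, hx0σ⟩
          omega
        refine s2_phiBasis_eq x₀ σ hx0σ ?_ _ ?_ _ hn
        · intro t ht htx z hz hzx htz
          exact hinj' t (Finset.mem_erase.2 ⟨htx, ht⟩) z (Finset.mem_erase.2 ⟨hzx, hz⟩) htz
        · intro w
          simp only [Finset.mem_image, Finset.mem_erase]
          constructor
          · rintro ⟨t, ⟨htx, ht⟩, rfl⟩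
            exact ⟨t, ht, htx, rfl⟩
          · rintro ⟨t, ht, htx, rfl⟩
            exact ⟨t, ⟨htx, ht⟩, rfl⟩
      rw [hL, hdrop, hphiσ, map_smul, diff_apply_single, dBasis, hfT,
        Finset.sum_image (fun a ha b hb h =>
          hinj' a (Finset.mem_of_mem_filter _ ha) b (Finset.mem_of_mem_filter _ hb) h),
        Finset.smul_sum]
      refine Finset.sum_congr rfl fun y hy' => ?_
      obtain ⟨hy, hcy⟩ := Finset.mem_filter.1 hy'
      rw [hphiE y hy (hinj.mono (fun t ht =>
          Finset.mem_coe.2 (Finset.mem_of_mem_erase (Finset.mem_coe.1 ht)))),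
        ← hTE y hy, smul_smul, smul_smul, hposT y hy]
      congr 1
      obtain ⟨k, hk⟩ : ∃ k, (σ.erase x₀).card = k + 1 :=
        ⟨(σ.erase x₀).card - 1, by have := Finset.card_pos.2 ⟨y, hy⟩; omega⟩
      have hck : σ.card - 1 = k + 1 := by
        have h2 := Finset.card_erase_of_mem hx0σ
        have h1 : 1 ≤ σ.card := Finset.card_pos.2 ⟨x₀, hx0σ⟩
        omega
      rw [hk, hck]
      have hkk : k + 1 - 1 = k := by omega
      rw [hkk, pow_succ, pow_succ]
      ring
    · -- non-injective case
      have hpair : ∃ a, a ∈ σ.erase x₀ ∧ ∃ b, b ∈ σ.erase x₀ ∧ x₀ ⊓ a = x₀ ⊓ b ∧ a ≠ b := by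
        rw [Set.InjOn] at hinj
        push_neg at hinj
        obtain ⟨a, ha, b, hb, h1, h2⟩ := hinj
        exact ⟨a, Finset.mem_coe.1 ha, b, Finset.mem_coe.1 hb, h1, h2⟩
      obtain ⟨a, ha, b, hb, hab, hne⟩ := hpair
      have hR0 : phiBasis x₀ σ = 0 :=
        s2_phiBasis_zero_pair x₀ σ (Finset.mem_of_mem_erase ha) (Finset.mem_of_mem_erase hb)
          (hy0 a ha) (hy0 b hb) hne hab
      rw [hL, hdrop, hR0, map_zero]
      by_cases hex : ∃ w ∈ σ.erase x₀, Set.InjOn (fun t => x₀ ⊓ t) ↑((σ.erase x₀).erase w)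
      · obtain ⟨w, hw, hinjw⟩ := hex
        have hwab : w = a ∨ w = b := by
          by_contra hc
          push_neg at hc
          exact hne (hinjw (Finset.mem_coe.2 (Finset.mem_erase.2 ⟨fun h => hc.1 h.symm, ha⟩))
            (Finset.mem_coe.2 (Finset.mem_erase.2 ⟨fun h => hc.2 h.symm, hb⟩)) hab)
        obtain ⟨z, hz, hzw, hmwz⟩ : ∃ z, z ∈ σ.erase x₀ ∧ z ≠ w ∧ x₀ ⊓ w = x₀ ⊓ z := by
          rcases hwab with rfl | rfl
          · exact ⟨b, hb, fun h => hne h.symm, hab⟩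
          · exact ⟨a, ha, hne, hab.symm⟩
        have hinjz : Set.InjOn (fun t => x₀ ⊓ t) ↑((σ.erase x₀).erase z) := by
          intro p hp q hq hpq
          have hpq' : x₀ ⊓ p = x₀ ⊓ q := hpq
          have hp' := Finset.mem_erase.1 (Finset.mem_coe.1 hp)
          have hq' := Finset.mem_erase.1 (Finset.mem_coe.1 hq)
          by_cases hpw : p = w
          · by_cases hqw : q = w
            · rw [hpw, hqw]
            · exfalso
              rw [hpw] at hpq'
              have hqz : q = z := hinjw
                (Finset.mem_coe.2 (Finset.mem_erase.2 ⟨hqw, hq'.2⟩))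
                (Finset.mem_coe.2 (Finset.mem_erase.2 ⟨hzw, hz⟩))
                (hpq'.symm.trans hmwz)
              exact hq'.1 hqz
          · by_cases hqw : q = w
            · exfalso
              rw [hqw] at hpq'
              have hpz : p = z := hinjw
                (Finset.mem_coe.2 (Finset.mem_erase.2 ⟨hpw, hp'.2⟩))
                (Finset.mem_coe.2 (Finset.mem_erase.2 ⟨hzw, hz⟩))
                (hpq'.trans hmwz)
              exact hp'.1 hpz
            · exact hinjw (Finset.mem_coe.2 (Finset.mem_erase.2 ⟨hpw, hp'.2⟩))
                (Finset.mem_coe.2 (Finset.mem_erase.2 ⟨hqw, hq'.2⟩)) hpq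
        have hmain : ∀ u v : Subsp l, u ∈ σ.erase x₀ → v ∈ σ.erase x₀ → r.lt u v →
            x₀ ⊓ u = x₀ ⊓ v →
            Set.InjOn (fun t => x₀ ⊓ t) ↑((σ.erase x₀).erase u) →
            Set.InjOn (fun t => x₀ ⊓ t) ↑((σ.erase x₀).erase v) →
            (∑ x ∈ (σ.erase x₀).filter (fun x => inter (σ.erase x) = inter σ),
              ((-1:ℚ) ^ pos r σ x) • phiBasis x₀ (σ.erase x)) = 0 := by
          intro u v hu hv huv hmuv hinju hinjv
          have huvne : u ≠ v := rlt_ne r huv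
          have hcu : inter (σ.erase u) = inter σ := hcond0 u hu v hv (Ne.symm huvne) hmuv
          have hcv : inter (σ.erase v) = inter σ := hcond0 v hv u hu huvne hmuv.symm
          have hsub : {u, v} ⊆ (σ.erase x₀).filter (fun x => inter (σ.erase x) = inter σ) := by
            intro t ht
            rcases Finset.mem_insert.1 ht with rfl | ht
            · exact Finset.mem_filter.2 ⟨hu, hcu⟩
            · rw [Finset.mem_singleton.1 ht]
              exact Finset.mem_filter.2 ⟨hv, hcv⟩
          have hzero : ∀ x ∈ (σ.erase x₀).filter (fun x => inter (σ.erase x) = inter σ),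
              x ∉ ({u, v} : Finset (Subsp l)) →
              ((-1:ℚ) ^ pos r σ x) • phiBasis x₀ (σ.erase x) = 0 := by
            intro x hx hxuv
            obtain ⟨hx', -⟩ := Finset.mem_filter.1 hx
            have hxu : x ≠ u := fun h => hxuv (by rw [h]; exact Finset.mem_insert_self u {v})
            have hxv : x ≠ v := fun h => hxuv (by
              rw [h]; exact Finset.mem_insert_of_mem (Finset.mem_singleton_self v))
            rw [s2_phiBasis_zero_pair x₀ (σ.erase x)
              (Finset.mem_erase.2 ⟨Ne.symm hxu, Finset.mem_of_mem_erase hu⟩)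
              (Finset.mem_erase.2 ⟨Ne.symm hxv, Finset.mem_of_mem_erase hv⟩)
              (hy0 u hu) (hy0 v hv) huvne hmuv, smul_zero]
          rw [← Finset.sum_subset hsub hzero, Finset.sum_pair huvne]
          have himg : ∀ c d : Subsp l, c ∈ σ.erase x₀ → d ∈ σ.erase x₀ → c ≠ d →
              x₀ ⊓ c = x₀ ⊓ d →
              ((σ.erase x₀).erase c).image (fun w => x₀ ⊓ w)
                = (σ.erase x₀).image (fun w => x₀ ⊓ w) := by
            intro c d hc hd hcd hmcd
            refine Finset.Subset.antisymm
              (Finset.image_subset_image (Finset.erase_subset _ _)) ?_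
            intro s hs
            obtain ⟨t, ht, rfl⟩ := Finset.mem_image.1 hs
            by_cases htc : t = c
            · subst htc
              exact Finset.mem_image.2 ⟨d, Finset.mem_erase.2 ⟨Ne.symm hcd, hd⟩, hmcd.symm⟩
            · exact Finset.mem_image.2 ⟨t, Finset.mem_erase.2 ⟨htc, ht⟩, rfl⟩
          rw [hphiE u hu hinju, hphiE v hv hinjv,
            himg u v hu hv huvne hmuv, himg v u hv hu (Ne.symm huvne) hmuv.symm]
          have hposv : pos r σ v = pos r σ u + 1 := by
            have hfilt : σ.filter (fun t => r.lt t v)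
                = insert u (σ.filter (fun t => r.lt t u)) := by
              ext t
              simp only [Finset.mem_filter, Finset.mem_insert]
              constructor
              · rintro ⟨htσ, htv⟩
                by_cases htu : t = u
                · exact Or.inl htu
                · refine Or.inr ⟨htσ, ?_⟩
                  rcases rlt_trich r t u with h | h | h
                  · exact h
                  · exact absurd h htu
                  · exfalso
                    have htx0 : t ≠ x₀ := by
                      rintro rfl
                      exact rlt_asymm r h (hlt0 u hu)
                    have ht' : t ∈ σ.erase x₀ := Finset.mem_erase.2 ⟨htx0, htσ⟩
                    have hmut : x₀ ⊓ u = x₀ ⊓ t :=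
                      hord.2.1 u (hσ'A hu) t (hσ'A ht') v (hσ'A hv)
                        (rle_of_lt r h) (rle_of_lt r htv) hmuv
                    have htveq : t = v := hinju
                      (Finset.mem_coe.2 (Finset.mem_erase.2 ⟨htu, ht'⟩))
                      (Finset.mem_coe.2 (Finset.mem_erase.2 ⟨Ne.symm huvne, hv⟩))
                      (hmut.symm.trans hmuv)
                    exact rlt_ne r htv htveq
              · rintro (rfl | ⟨htσ, htu⟩)
                · exact ⟨Finset.mem_of_mem_erase hu, huv⟩
                · exact ⟨htσ, rlt_trans r htu huv⟩
            have hnot : u ∉ σ.filter (fun t => r.lt t u) :=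
              fun h => rlt_irrefl r u (Finset.mem_filter.1 h).2
            simp only [pos]
            rw [hfilt, Finset.card_insert_of_notMem hnot]
          rw [hposv, smul_smul, smul_smul, ← add_smul]
          convert zero_smul ℚ _
          rw [pow_succ]
          ring
        rcases rlt_trich r w z with h | h | h
        · exact hmain w z hw hz h hmwz hinjw hinjz
        · exact absurd h.symm hzw
        · exact hmain z w hz hw h hmwz.symm hinjz hinjw
      · push_neg at hex
        refine Finset.sum_eq_zero fun x hx => ?_
        obtain ⟨hx', -⟩ := Finset.mem_filter.1 hx
        rw [hphi0 x (hex x hx'), smul_zero]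
  · have hR : phiBasis x₀ σ = 0 := s2_phiBasis_zero x₀ σ hx0σ
    rw [hL, hR, map_zero]
    refine Finset.sum_eq_zero fun x hx => ?_
    rw [s2_phiBasis_zero x₀ (σ.erase x)
      (fun h => hx0σ (Finset.mem_of_mem_erase h)), smul_zero]

end Statement2Aux

/-- Lemma 3.1. The map `φ : D(A) → D(Ã'')` commutes with the
differentials, the fixed linear order being chosen as in the paper (`x₀` first,
`∼`-classes consecutive, and the order of `Ã''` compatible with that of `A'`). -/
theorem statement2 {l : ℕ} (r : LinearOrder (Subsp l)) (A : Finset (Subsp l))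
    (harr : IsArrangement A) (x₀ : Subsp l) (hx₀ : x₀ ∈ A) (hord : GoodOrder r A x₀) :
    ∀ f ∈ Dsub A, phi x₀ (diff r f) = diff r (phi x₀ f) := by
  intro f hf
  induction hf using Submodule.span_induction with
  | mem f hfmem =>
      obtain ⟨σ, hσ, rfl⟩ := hfmem
      rw [diff_apply_single, phi_apply_single]
      exact s2_key r A harr x₀ hx₀ hord σ hσ
  | zero => simp
  | add f g _ _ hf hg => simp [map_add, hf, hg]
  | smul c f _ hf => simp [map_smul, hf]
end

section
/- Let A be a subspace arrangement in ℂ^l, x₀ ∈ A, A' = A \ {x₀}, and φ : D(A) → D(Ã'') the cochain map defined by φ(σ) = 0 if x₀ ∉ σ or if σ contains two distinct y, z ∈ A' with x₀ ∩ y = x₀ ∩ z, and φ({x₀, x_{i_1}, …, x_{i_r}}) = (−1)^r {x₀ ∩ x_{i_1}, …, x₀ ∩ x_{i_r}} otherwise. Then φ is surjective, φ vanishes on the subcomplex D(A') ⊆ D(A), and hence φ induces a surjective cochain map φ̄ : D(A)/D(A') → D(Ã''). -/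
/-!
Formalization of the Yuzvinsky–Feichtner rational model `D(B)` of the
complement of an arrangement of linear subspaces of `ℂ^l`, together with the
deletion/restriction constructions of the paper.
-/

open scoped Classical

noncomputable section

noncomputable section StatementThree

namespace Stmt3

variable {l : ℕ}

lemma inter_insert (x : Subsp l) (s : Finset (Subsp l)) :
    inter (insert x s) = x ⊓ inter s := by
  simp [inter]

lemma inter_le {s : Finset (Subsp l)} {x : Subsp l} (hx : x ∈ s) : inter s ≤ x :=
  Finset.inf_le hx

lemma inter_mono {s t : Finset (Subsp l)} (h : s ⊆ t) : inter t ≤ inter s :=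
  Finset.inf_mono h

lemma inter_image_inf (x₀ : Subsp l) {s : Finset (Subsp l)} (hs : s.Nonempty) :
    inter (s.image fun y => x₀ ⊓ y) = x₀ ⊓ inter s := by
  rw [inter, Finset.inf_image]
  unfold inter
  induction hs using Finset.Nonempty.cons_induction with
  | singleton a => simp
  | cons a s h hs ih =>
      rw [Finset.inf_cons, Finset.inf_cons, ih]
      exact (inf_inf_distrib_left x₀ a (s.inf id)).symm

lemma image_erase_injOn {α β : Type*} [DecidableEq α] [DecidableEq β] {f : α → β}
    {s : Finset α} (hf : Set.InjOn f ↑s) {x : α} (hx : x ∈ s) :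
    (s.erase x).image f = (s.image f).erase (f x) := by
  ext b
  simp only [Finset.mem_image, Finset.mem_erase]
  constructor
  · rintro ⟨a, ha, rfl⟩
    rcases ha with ⟨hax, has⟩
    exact ⟨fun h => hax (hf has hx h), ⟨a, has, rfl⟩⟩
  · rintro ⟨hb, a, has, rfl⟩
    exact ⟨a, ⟨fun h => hb (by rw [h]), has⟩, rfl⟩

/-- Wrapper to keep `LinearOrder` out of the local-instance set. -/
structure ROrd (l : ℕ) where ord : LinearOrder (Subsp l)

lemma dec_erase {α : Type*} (i : DecidableEq α) (s : Finset α) (x : α) :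
    @Finset.erase α i s x = @Finset.erase α (fun a b => Classical.propDecidable (a = b)) s x := by
  congr!

lemma dec_filter {α : Type*} (p : α → Prop) (i : DecidablePred p) (s : Finset α) :
    @Finset.filter α p i s = @Finset.filter α p (fun a => Classical.propDecidable (p a)) s := by
  congr!


lemma mem_dec {α : Type*} {i j : DecidableEq α} {a x : α} {s : Finset α}
    (h : a ∈ @Finset.erase α i s x) : a ∈ @Finset.erase α j s x := by
  rw [dec_erase j]
  rw [dec_erase i] at h
  exact h

lemma phiBasis_of_mem {x₀ : Subsp l} {σ : Finset (Subsp l)} (h0 : x₀ ∈ σ)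
    (hinj : Set.InjOn (fun y => x₀ ⊓ y) ↑(σ.erase x₀)) :
    phiBasis x₀ σ
      = ((-1 : ℚ) ^ (σ.card - 1)) • Finsupp.single ((σ.erase x₀).image fun y => x₀ ⊓ y) (1 : ℚ) := by
  rw [phiBasis, if_pos ⟨h0, hinj⟩]

lemma phiBasis_not_mem {x₀ : Subsp l} {σ : Finset (Subsp l)} (h0 : x₀ ∉ σ) :
    phiBasis x₀ σ = 0 := by
  rw [phiBasis, if_neg (fun h => h0 h.1)]

lemma phiBasis_not_inj {x₀ : Subsp l} {σ : Finset (Subsp l)}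
    (h : ¬ Set.InjOn (fun y => x₀ ⊓ y) ↑(σ.erase x₀)) :
    phiBasis x₀ σ = 0 := by
  rw [phiBasis, if_neg (fun hc => h hc.2)]

lemma P_of_pair {x₀ : Subsp l} {σ : Finset (Subsp l)} (h0 : x₀ ∈ σ)
    {y z : Subsp l} (hy : y ∈ σ.erase x₀) (hz : z ∈ σ.erase x₀) (hne : y ≠ z)
    (hg : x₀ ⊓ y = x₀ ⊓ z) :
    inter (σ.erase y) = inter σ := by
  have hyσ : y ∈ σ := Finset.mem_of_mem_erase hy
  have hyx₀ : y ≠ x₀ := (Finset.mem_erase.mp hy).1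
  have hzy : z ∈ σ.erase y :=
    Finset.mem_erase.mpr ⟨fun h => hne h.symm, Finset.mem_of_mem_erase hz⟩
  have hx₀y : x₀ ∈ σ.erase y := Finset.mem_erase.mpr ⟨fun h => hyx₀ h.symm, h0⟩
  apply le_antisymm
  · have h1 : inter (σ.erase y) ≤ y := by
      calc inter (σ.erase y) ≤ x₀ ⊓ z := le_inf (inter_le hx₀y) (inter_le hzy)
        _ = x₀ ⊓ y := hg.symm
        _ ≤ y := inf_le_right
    conv_rhs => rw [← Finset.insert_erase hyσ]
    rw [inter_insert]
    exact le_inf h1 le_rfl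
  · exact inter_mono (Finset.erase_subset _ _)

lemma inj_transfer {x₀ : Subsp l} {s : Finset (Subsp l)} {y z : Subsp l}
    (hz : z ∈ s) (hne : y ≠ z) (hg : x₀ ⊓ y = x₀ ⊓ z)
    (hinj : Set.InjOn (fun w => x₀ ⊓ w) ↑(s.erase y)) :
    Set.InjOn (fun w => x₀ ⊓ w) ↑(s.erase z) := by
  intro a ha b hb hab
  simp only [Finset.coe_erase, Set.mem_diff, Set.mem_singleton_iff, Finset.mem_coe] at ha hb
  by_cases hay : a = y
  · by_cases hby : b = y
    · rw [hay, hby]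
    · exfalso
      have hbz : x₀ ⊓ b = x₀ ⊓ z := by
        have h' : x₀ ⊓ a = x₀ ⊓ b := hab
        rw [hay] at h'
        rw [← h', hg]
      have : b = z := hinj (by
          simp only [Finset.coe_erase, Set.mem_diff, Set.mem_singleton_iff, Finset.mem_coe]
          exact ⟨hb.1, hby⟩)
        (by
          simp only [Finset.coe_erase, Set.mem_diff, Set.mem_singleton_iff, Finset.mem_coe]
          exact ⟨hz, fun h => hne h.symm⟩) hbz
      exact hb.2 this
  · by_cases hby : b = y
    · exfalso
      have haz : x₀ ⊓ a = x₀ ⊓ z := by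
        have h' : x₀ ⊓ a = x₀ ⊓ b := hab
        rw [hby] at h'
        rw [h', hg]
      have : a = z := hinj (by
          simp only [Finset.coe_erase, Set.mem_diff, Set.mem_singleton_iff, Finset.mem_coe]
          exact ⟨ha.1, hay⟩)
        (by
          simp only [Finset.coe_erase, Set.mem_diff, Set.mem_singleton_iff, Finset.mem_coe]
          exact ⟨hz, fun h => hne h.symm⟩) haz
      exact ha.2 this
    · exact hinj (by
          simp only [Finset.coe_erase, Set.mem_diff, Set.mem_singleton_iff, Finset.mem_coe]
          exact ⟨ha.1, hay⟩)
        (by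
          simp only [Finset.coe_erase, Set.mem_diff, Set.mem_singleton_iff, Finset.mem_coe]
          exact ⟨hb.1, hby⟩) hab

lemma image_erase_of_pair {x₀ : Subsp l} {s : Finset (Subsp l)} {y z : Subsp l}
    (hz : z ∈ s) (hne : y ≠ z) (hg : x₀ ⊓ y = x₀ ⊓ z) :
    ((s.erase y).image fun w => x₀ ⊓ w) = s.image fun w => x₀ ⊓ w := by
  apply Finset.Subset.antisymm
  · exact Finset.image_subset_image (Finset.erase_subset _ _)
  · intro b hb
    rcases Finset.mem_image.mp hb with ⟨a, ha, rfl⟩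
    by_cases hay : a = y
    · exact Finset.mem_image.mpr ⟨z, Finset.mem_erase.mpr ⟨fun h => hne h.symm, hz⟩,
        by rw [hay] at *; exact hg.symm⟩
    · exact Finset.mem_image.mpr ⟨a, Finset.mem_erase.mpr ⟨hay, ha⟩, rfl⟩

lemma PQ_iff {A : Finset (Subsp l)} (harr : IsArrangement A) {x₀ : Subsp l} (hx₀ : x₀ ∈ A)
    {s : Finset (Subsp l)} (hs : s ⊆ A.erase x₀)
    {x : Subsp l} (hx : x ∈ s) :
    (inter ((insert x₀ s).erase x) = inter (insert x₀ s)) ↔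
      (inter (((s.erase x).image fun y => x₀ ⊓ y))
        = inter (s.image fun y => x₀ ⊓ y)) := by
  have hxA' : x ∈ A.erase x₀ := hs hx
  have hxx0 : x ≠ x₀ := (Finset.mem_erase.mp hxA').1
  have hxA : x ∈ A := Finset.mem_of_mem_erase hxA'
  have h1 : (insert x₀ s).erase x = insert x₀ (s.erase x) :=
    Finset.erase_insert_of_ne (fun h => hxx0 h.symm)
  rw [h1, inter_insert, inter_insert, inter_image_inf x₀ ⟨x, hx⟩]
  by_cases hse : s.erase x = ∅
  · have hsx : s = {x} := by
      rcases (Finset.erase_eq_empty_iff s x).mp hse with h | h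
      · exact absurd (h ▸ hx) (Finset.notMem_empty x)
      · exact h
    rw [hse, hsx]
    simp only [Finset.image_empty, Finset.erase_singleton]
    constructor
    · intro h
      exfalso
      have hle : x₀ ≤ x := by
        have h2 : x₀ ⊓ ⊤ = x₀ ⊓ x := by simpa [inter] using h
        rw [inf_top_eq] at h2
        rw [h2]
        exact inf_le_right
      exact hxx0 (harr x₀ hx₀ x hxA hle).symm
    · intro h
      exfalso
      have h' : x₀ ⊓ x = ⊤ := by
        have he : inter (∅ : Finset (Subsp l)) = ⊤ := by simp [inter]
        rw [he] at h
        have h2 : inter ({x} : Finset (Subsp l)) = x := by simp [inter]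
        rw [h2] at h
        exact h.symm
      rcases inf_eq_top_iff.mp h' with ⟨h₀, hxtop⟩
      have : x ≤ x₀ := by rw [h₀]; exact le_top
      exact hxx0 (harr x hxA x₀ hx₀ this)
  · rw [inter_image_inf x₀ (Finset.nonempty_of_ne_empty hse)]

lemma phi_dBasis_expand (R : ROrd l) (x₀ : Subsp l) (σ : Finset (Subsp l)) :
    phi x₀ (dBasis R.ord σ) = ∑ x ∈ σ.filter (fun x => inter (σ.erase x) = inter σ),
      ((-1 : ℚ) ^ pos R.ord σ x) • phiBasis x₀ (σ.erase x) := by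
  rw [dBasis, map_sum]
  simp only [dec_erase, dec_filter]
  refine Finset.sum_congr rfl fun x _ => ?_
  rw [map_smul, phi_apply_single]

lemma glt_iff (R : ROrd l) {A : Finset (Subsp l)} {x₀ : Subsp l}
    (hord : GoodOrder R.ord A x₀) {s : Finset (Subsp l)} (hs : s ⊆ A.erase x₀)
    (hinj : Set.InjOn (fun y => x₀ ⊓ y) ↑s) {x y : Subsp l} (hx : x ∈ s) (hy : y ∈ s) :
    R.ord.lt (x₀ ⊓ y) (x₀ ⊓ x) ↔ R.ord.lt y x := by
  constructor
  · intro h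
    rcases @lt_trichotomy _ R.ord y x with h' | h' | h'
    · exact h'
    · exact absurd h (by rw [h']; exact @lt_irrefl _ R.ord.toPartialOrder.toPreorder _)
    · have hne : x₀ ⊓ x ≠ x₀ ⊓ y := fun e => by
        have hxy : x = y := hinj hx hy e
        rw [hxy] at h'
        exact (@lt_irrefl _ R.ord.toPartialOrder.toPreorder _) h'
      have h2 := hord.2.2 x (mem_dec (hs hx)) y (mem_dec (hs hy)) h' hne
      exact absurd h (@lt_asymm _ R.ord.toPartialOrder.toPreorder _ _ h2)
  · intro h
    have hne : x₀ ⊓ y ≠ x₀ ⊓ x := fun e => by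
      have hxy : y = x := hinj hy hx e
      rw [hxy] at h
      exact (@lt_irrefl _ R.ord.toPartialOrder.toPreorder _) h
    exact hord.2.2 y (mem_dec (hs hy)) x (mem_dec (hs hx)) h hne

lemma pos_image (R : ROrd l) {A : Finset (Subsp l)} {x₀ : Subsp l}
    (hord : GoodOrder R.ord A x₀) {s : Finset (Subsp l)} (hs : s ⊆ A.erase x₀)
    (hinj : Set.InjOn (fun y => x₀ ⊓ y) ↑s) {x : Subsp l} (hx : x ∈ s) :
    pos R.ord (s.image fun y => x₀ ⊓ y) (x₀ ⊓ x) = pos R.ord s x := by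
  unfold pos
  congr 1
  rw [Finset.filter_image,
    Finset.card_image_of_injOn (hinj.mono (Finset.coe_subset.mpr (Finset.filter_subset _ s)))]
  congr 1
  apply Finset.filter_congr
  intro y hy
  first
  | exact glt_iff R hord hs hinj hx hy
  | exact propext (glt_iff R hord hs hinj hx hy)

lemma pos_insert (R : ROrd l) {x₀ : Subsp l} {s : Finset (Subsp l)}
    (h0 : x₀ ∉ s) {x : Subsp l} (hlt : R.ord.lt x₀ x) :
    pos R.ord (insert x₀ s) x = pos R.ord s x + 1 := by
  unfold pos
  rw [Finset.filter_insert, if_pos hlt,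
    Finset.card_insert_of_notMem (fun hc => h0 (Finset.mem_of_mem_filter _ hc))]

lemma pos_adjacent (R : ROrd l) {s : Finset (Subsp l)} {y z : Subsp l}
    (hy : y ∈ s) (hyz : R.ord.lt y z)
    (hbetween : ∀ w ∈ s, R.ord.lt y w → R.ord.lt w z → False) :
    pos R.ord s z = pos R.ord s y + 1 := by
  unfold pos
  have hkey : s.filter (fun w => R.ord.lt w z) = insert y (s.filter fun w => R.ord.lt w y) := by
    ext w
    simp only [Finset.mem_filter, Finset.mem_insert]
    constructor
    · rintro ⟨hw, hwz⟩
      rcases @lt_trichotomy _ R.ord w y with h | h | h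
      · exact Or.inr ⟨hw, h⟩
      · exact Or.inl h
      · exact absurd (hbetween w hw h hwz) (fun h => h)
    · rintro (rfl | ⟨hw, hwy⟩)
      · exact ⟨hy, hyz⟩
      · exact ⟨hw, @lt_trans _ R.ord.toPartialOrder.toPreorder _ _ _ hwy hyz⟩
  rw [hkey, Finset.card_insert_of_notMem (fun hc => by
    exact (@lt_irrefl _ R.ord.toPartialOrder.toPreorder y) (Finset.mem_filter.mp hc).2)]

lemma case2b (R : ROrd l) {A : Finset (Subsp l)} (harr : IsArrangement A)
    {x₀ : Subsp l} (hx₀ : x₀ ∈ A) (hord : GoodOrder R.ord A x₀)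
    {s : Finset (Subsp l)} (hs : s ⊆ A.erase x₀) (h0 : x₀ ∉ s)
    (hinj : Set.InjOn (fun y => x₀ ⊓ y) ↑s) :
    phi x₀ (dBasis R.ord (insert x₀ s)) = diff R.ord (phiBasis x₀ (insert x₀ s)) := by
  have hmem : x₀ ∈ insert x₀ s := Finset.mem_insert_self _ _
  have herase : (insert x₀ s).erase x₀ = s := Finset.erase_insert h0
  have hcard : (insert x₀ s).card = s.card + 1 := Finset.card_insert_of_notMem h0
  have hinj' : Set.InjOn (fun y => x₀ ⊓ y) ↑((insert x₀ s).erase x₀) := by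
    rw [herase]; exact hinj
  rw [phi_dBasis_expand]
  rw [phiBasis_of_mem hmem hinj', herase, map_smul, diff_apply_single, dBasis]
  simp only [dec_erase, dec_filter]
  have hexp : (insert x₀ s).card - 1 = s.card := by omega
  rw [hexp]
  rw [Finset.filter_image]
  rw [Finset.sum_image (fun a ha b hb hab =>
    hinj (Finset.mem_coe.mpr (Finset.mem_of_mem_filter _ ha))
      (Finset.mem_coe.mpr (Finset.mem_of_mem_filter _ hb)) hab)]
  rw [Finset.smul_sum]
  have hfilter : s.filter (fun x => inter ((insert x₀ s).erase x) = inter (insert x₀ s))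
      = s.filter (fun x => inter (((s.image fun y => x₀ ⊓ y)).erase (x₀ ⊓ x))
          = inter (s.image fun y => x₀ ⊓ y)) := by
    apply Finset.filter_congr
    intro x hx
    rw [← image_erase_injOn hinj hx]
    first
    | exact PQ_iff harr hx₀ hs hx
    | exact propext (PQ_iff harr hx₀ hs hx)
  have term_eq : ∀ x ∈ s.filter (fun x => inter (((s.image fun y => x₀ ⊓ y)).erase (x₀ ⊓ x))
          = inter (s.image fun y => x₀ ⊓ y)),
      ((-1 : ℚ) ^ pos R.ord (insert x₀ s) x) • phiBasis x₀ ((insert x₀ s).erase x)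
        = (-1 : ℚ) ^ s.card •
          ((-1 : ℚ) ^ pos R.ord (s.image fun y => x₀ ⊓ y) (x₀ ⊓ x) •
            Finsupp.single ((s.image fun y => x₀ ⊓ y).erase (x₀ ⊓ x)) (1 : ℚ)) := by
    intro x hx
    have hxs : x ∈ s := Finset.mem_of_mem_filter _ hx
    have hxx0 : x ≠ x₀ := (Finset.mem_erase.mp (hs hxs)).1
    have h1 : (insert x₀ s).erase x = insert x₀ (s.erase x) :=
      Finset.erase_insert_of_ne (fun h => hxx0 h.symm)
    have h0' : x₀ ∉ s.erase x := fun h => h0 (Finset.mem_of_mem_erase h)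
    have hinj2 : Set.InjOn (fun y => x₀ ⊓ y) ↑((insert x₀ (s.erase x)).erase x₀) := by
      rw [Finset.erase_insert h0']
      exact hinj.mono (Finset.coe_subset.mpr (Finset.erase_subset _ _))
    rw [h1, phiBasis_of_mem (Finset.mem_insert_self _ _) hinj2, Finset.erase_insert h0']
    have hcard2 : (insert x₀ (s.erase x)).card - 1 = s.card - 1 := by
      rw [Finset.card_insert_of_notMem h0']
      have := Finset.card_erase_add_one hxs
      omega
    rw [hcard2]
    rw [pos_insert R h0 (hord.1 x (mem_dec (hs hxs)))]
    rw [pos_image R hord hs hinj hxs]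
    rw [image_erase_injOn hinj hxs]
    rw [smul_smul, smul_smul, ← pow_add, ← pow_add]
    have hcpos : 1 ≤ s.card := Finset.card_pos.mpr ⟨x, hxs⟩
    have hee : pos R.ord s x + 1 + (s.card - 1) = s.card + pos R.ord s x := by omega
    rw [hee]
  by_cases hP : inter ((insert x₀ s).erase x₀) = inter (insert x₀ s)
  · rw [Finset.filter_insert]
    split_ifs with hP'
    · simp only [dec_erase, dec_filter] at hfilter term_eq herase ⊢
      rw [Finset.sum_insert (fun hc => h0 (Finset.mem_of_mem_filter _ hc)), herase,
        phiBasis_not_mem h0, smul_zero, zero_add]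
      rw [hfilter]
      exact Finset.sum_congr rfl term_eq
    · exact absurd hP hP'
  · rw [Finset.filter_insert]
    split_ifs with hP'
    · exact absurd hP' hP
    · simp only [dec_erase, dec_filter] at hfilter term_eq ⊢
      rw [hfilter]
      exact Finset.sum_congr rfl term_eq

lemma case2a (R : ROrd l) {A : Finset (Subsp l)} {x₀ : Subsp l}
    (hord : GoodOrder R.ord A x₀) {σ : Finset (Subsp l)} (hσ : σ ⊆ A) (h0 : x₀ ∈ σ)
    {y z : Subsp l} (hy : y ∈ σ.erase x₀) (hz : z ∈ σ.erase x₀) (hyz : R.ord.lt y z)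
    (hg : x₀ ⊓ y = x₀ ⊓ z) :
    ∑ x ∈ σ.filter (fun x => inter (σ.erase x) = inter σ),
      ((-1 : ℚ) ^ pos R.ord σ x) • phiBasis x₀ (σ.erase x) = 0 := by
  have hne : y ≠ z := fun h => by
    rw [h] at hyz
    exact (@lt_irrefl _ R.ord.toPartialOrder.toPreorder _) hyz
  have hyσ : y ∈ σ := Finset.mem_of_mem_erase hy
  have hzσ : z ∈ σ := Finset.mem_of_mem_erase hz
  have hyx0 : y ≠ x₀ := (Finset.mem_erase.mp hy).1
  have hzx0 : z ≠ x₀ := (Finset.mem_erase.mp hz).1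
  have hyA' : y ∈ A.erase x₀ := Finset.mem_erase.mpr ⟨hyx0, hσ hyσ⟩
  have hzA' : z ∈ A.erase x₀ := Finset.mem_erase.mpr ⟨hzx0, hσ hzσ⟩
  by_cases hinjy : Set.InjOn (fun w => x₀ ⊓ w) ↑((σ.erase x₀).erase y)
  · have hinjz : Set.InjOn (fun w => x₀ ⊓ w) ↑((σ.erase x₀).erase z) :=
      inj_transfer hz hne hg hinjy
    have hPy : inter (σ.erase y) = inter σ := P_of_pair h0 hy hz hne hg
    have hPz : inter (σ.erase z) = inter σ := P_of_pair h0 hz hy (fun h => hne h.symm) hg.symm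
    have hsub : ({y, z} : Finset (Subsp l))
        ⊆ σ.filter (fun x => inter (σ.erase x) = inter σ) := by
      intro w hw
      rcases Finset.mem_insert.mp hw with rfl | hw
      · exact Finset.mem_filter.mpr ⟨hyσ, hPy⟩
      · rw [Finset.mem_singleton.mp hw]
        exact Finset.mem_filter.mpr ⟨hzσ, hPz⟩
    rw [← Finset.sum_subset hsub (fun x hxf hxp => ?_)]
    · rw [Finset.sum_pair hne]
      have hx0y : x₀ ∈ σ.erase y := Finset.mem_erase.mpr ⟨fun h => hyx0 h.symm, h0⟩
      have hx0z : x₀ ∈ σ.erase z := Finset.mem_erase.mpr ⟨fun h => hzx0 h.symm, h0⟩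
      have hiy : Set.InjOn (fun w => x₀ ⊓ w) ↑((σ.erase y).erase x₀) := by
        rw [Finset.erase_right_comm]
        exact hinjy
      have hiz : Set.InjOn (fun w => x₀ ⊓ w) ↑((σ.erase z).erase x₀) := by
        rw [Finset.erase_right_comm]
        exact hinjz
      rw [phiBasis_of_mem hx0y hiy, phiBasis_of_mem hx0z hiz]
      rw [Finset.erase_right_comm (a := y), Finset.erase_right_comm (a := z)]
      rw [image_erase_of_pair hz hne hg,
        image_erase_of_pair hy (fun h => hne h.symm) hg.symm]
      have hbetween : ∀ w ∈ σ, R.ord.lt y w → R.ord.lt w z → False := by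
        intro w hw h1 h2
        have hwx0 : w ≠ x₀ := by
          rintro rfl
          exact (@lt_asymm _ R.ord.toPartialOrder.toPreorder _ _ h1) (hord.1 y (mem_dec hyA'))
        have hwσ' : w ∈ σ.erase x₀ := Finset.mem_erase.mpr ⟨hwx0, hw⟩
        have hwA' : w ∈ A.erase x₀ := Finset.mem_erase.mpr ⟨hwx0, hσ hw⟩
        have hgw : x₀ ⊓ y = x₀ ⊓ w :=
          hord.2.1 y (mem_dec hyA') w (mem_dec hwA') z (mem_dec hzA')
            (@le_of_lt _ R.ord.toPartialOrder.toPreorder _ _ h1)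
            (@le_of_lt _ R.ord.toPartialOrder.toPreorder _ _ h2) hg
        have hwy : w ≠ y := fun h => by
          rw [h] at h1
          exact (@lt_irrefl _ R.ord.toPartialOrder.toPreorder _) h1
        have hwz : w ≠ z := fun h => by
          rw [h] at h2
          exact (@lt_irrefl _ R.ord.toPartialOrder.toPreorder _) h2
        have : w = z := hinjy
          (Finset.mem_coe.mpr (Finset.mem_erase.mpr ⟨hwy, hwσ'⟩))
          (Finset.mem_coe.mpr (Finset.mem_erase.mpr ⟨fun h => hne h.symm, hz⟩))
          (by
            show x₀ ⊓ w = x₀ ⊓ z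
            rw [← hgw, hg])
        exact hwz this
      have hpos : pos R.ord σ z = pos R.ord σ y + 1 := pos_adjacent R hyσ hyz hbetween
      have hcards : (σ.erase y).card = (σ.erase z).card := by
        rw [Finset.card_erase_of_mem hyσ, Finset.card_erase_of_mem hzσ]
      rw [hpos, hcards, smul_smul, smul_smul, ← add_smul, pow_succ]
      have : (-1 : ℚ) ^ pos R.ord σ y * (-1 : ℚ) ^ ((σ.erase z).card - 1)
          + (-1 : ℚ) ^ pos R.ord σ y * -1 * (-1 : ℚ) ^ ((σ.erase z).card - 1) = 0 := by ring
      rw [this, zero_smul]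
    · by_cases hx0 : x = x₀
      · rw [hx0, phiBasis_not_mem (Finset.notMem_erase _ _), smul_zero]
      · have hxσ : x ∈ σ := Finset.mem_of_mem_filter _ hxf
        have hxy : x ≠ y := fun h => hxp (by rw [h]; exact Finset.mem_insert_self _ _)
        have hxz : x ≠ z := fun h => hxp (by
          rw [h]
          exact Finset.mem_insert_of_mem (Finset.mem_singleton_self _))
        rw [phiBasis_not_inj (fun hi => ?_), smul_zero]
        apply hne
        apply hi
        · exact Finset.mem_coe.mpr (Finset.mem_erase.mpr ⟨hyx0,
            Finset.mem_erase.mpr ⟨fun h => hxy h.symm, hyσ⟩⟩)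
        · exact Finset.mem_coe.mpr (Finset.mem_erase.mpr ⟨hzx0,
            Finset.mem_erase.mpr ⟨fun h => hxz h.symm, hzσ⟩⟩)
        · exact hg
  · have hinjz : ¬ Set.InjOn (fun w => x₀ ⊓ w) ↑((σ.erase x₀).erase z) := fun h =>
      hinjy (inj_transfer hy (fun h' => hne h'.symm) hg.symm h)
    apply Finset.sum_eq_zero
    intro x hx
    by_cases hx0 : x = x₀
    · rw [hx0, phiBasis_not_mem (Finset.notMem_erase _ _), smul_zero]
    · rw [phiBasis_not_inj (fun hi => ?_), smul_zero]
      rw [Finset.erase_right_comm] at hi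
      by_cases hxy : x = y
      · rw [hxy] at hi
        exact hinjy hi
      · by_cases hxz : x = z
        · rw [hxz] at hi
          exact hinjz hi
        · apply hne
          apply hi
          · exact Finset.mem_coe.mpr (Finset.mem_erase.mpr ⟨fun h => hxy h.symm, hy⟩)
          · exact Finset.mem_coe.mpr (Finset.mem_erase.mpr ⟨fun h => hxz h.symm, hz⟩)
          · exact hg

lemma key (R : ROrd l) {A : Finset (Subsp l)} (harr : IsArrangement A)
    {x₀ : Subsp l} (hx₀ : x₀ ∈ A) (hord : GoodOrder R.ord A x₀)
    {σ : Finset (Subsp l)} (hσ : σ ⊆ A) :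
    phi x₀ (dBasis R.ord σ) = diff R.ord (phiBasis x₀ σ) := by
  by_cases h0 : x₀ ∈ σ
  · by_cases hinj : Set.InjOn (fun y => x₀ ⊓ y) ↑(σ.erase x₀)
    · have hσ' : σ.erase x₀ ⊆ A.erase x₀ := Finset.erase_subset_erase _ hσ
      have h := case2b R harr hx₀ hord hσ' (Finset.notMem_erase _ _) hinj
      rwa [Finset.insert_erase h0] at h
    · rw [phiBasis_not_inj hinj, map_zero, phi_dBasis_expand]
      have hpair : ∃ y, y ∈ σ.erase x₀ ∧ ∃ z, z ∈ σ.erase x₀ ∧ x₀ ⊓ y = x₀ ⊓ z ∧ y ≠ z := by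
        by_contra hc
        push_neg at hc
        apply hinj
        intro a ha b hb hab
        exact hc a (Finset.mem_coe.mp ha) b (Finset.mem_coe.mp hb) hab
      obtain ⟨y, hy, z, hz, hg, hne⟩ := hpair
      rcases @lt_trichotomy _ R.ord y z with h | h | h
      · exact case2a R hord hσ h0 hy hz h hg
      · exact absurd h hne
      · exact case2a R hord hσ h0 hz hy h hg.symm
  · rw [phiBasis_not_mem h0, map_zero, phi_dBasis_expand]
    apply Finset.sum_eq_zero
    intro x hx
    rw [phiBasis_not_mem (fun h => h0 (Finset.mem_of_mem_erase h)), smul_zero]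

lemma phi_diff_comm (R : ROrd l) {A : Finset (Subsp l)} (harr : IsArrangement A)
    {x₀ : Subsp l} (hx₀ : x₀ ∈ A) (hord : GoodOrder R.ord A x₀) :
    ∀ f ∈ Dsub A, phi x₀ (diff R.ord f) = diff R.ord (phi x₀ f) := by
  intro f hf
  induction hf using Submodule.span_induction with
  | mem f hfmem =>
      obtain ⟨σ, hσ, rfl⟩ := hfmem
      rw [diff_apply_single, phi_apply_single]
      exact key R harr hx₀ hord hσ
  | zero => simp
  | add f g _ _ hf hg => simp [map_add, hf, hg]
  | smul c f _ hf => simp [map_smul, hf]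

lemma surj_onto (R : ROrd l) {A : Finset (Subsp l)} (harr : IsArrangement A)
    {x₀ : Subsp l} (hx₀ : x₀ ∈ A) (hord : GoodOrder R.ord A x₀) :
    Submodule.map (phi x₀) (Dsub A) = Dsub (tildeRestriction x₀ (A.erase x₀)) := by
  apply le_antisymm
  · rw [Dsub, Submodule.map_span, Submodule.span_le]
    rintro f ⟨f', ⟨σ, hσ, rfl⟩, rfl⟩
    rw [SetLike.mem_coe, phi_apply_single, phiBasis]
    split_ifs with hcond
    · apply Submodule.smul_mem
      apply Submodule.subset_span
      refine ⟨(σ.erase x₀).image fun y => x₀ ⊓ y, ?_, rfl⟩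
      rw [tildeRestriction]
      exact Finset.image_subset_image (Finset.erase_subset_erase _ hσ)
    · exact Submodule.zero_mem _
  · rw [Dsub, Submodule.span_le]
    rintro f ⟨τ, hτ, rfl⟩
    classical
    set h : Subsp l → Subsp l := fun w =>
      if hw : ∃ y, y ∈ A.erase x₀ ∧ x₀ ⊓ y = w then hw.choose else x₀ with hdef
    have hprop : ∀ w ∈ τ, h w ∈ A.erase x₀ ∧ x₀ ⊓ h w = w := by
      intro w hw
      have hex : ∃ y, y ∈ A.erase x₀ ∧ x₀ ⊓ y = w := by
        rcases Finset.mem_image.mp (hτ hw) with ⟨y, hy, hyw⟩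
        exact ⟨y, hy, hyw⟩
      rw [hdef]
      simp only [dif_pos hex]
      exact hex.choose_spec
    set σ' : Finset (Subsp l) := τ.image h with hσ'def
    have hx0σ' : x₀ ∉ σ' := by
      intro hc
      rcases Finset.mem_image.mp hc with ⟨w, hw, hwe⟩
      exact (Finset.mem_erase.mp (hprop w hw).1).1 hwe
    set σ : Finset (Subsp l) := insert x₀ σ' with hσdef
    have hσA : σ ⊆ A := by
      intro w hw
      rcases Finset.mem_insert.mp hw with rfl | hw
      · exact hx₀
      · rcases Finset.mem_image.mp hw with ⟨v, hv, rfl⟩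
        exact Finset.mem_of_mem_erase (hprop v hv).1
    have herase : σ.erase x₀ = σ' := Finset.erase_insert hx0σ'
    have hinjσ : Set.InjOn (fun y => x₀ ⊓ y) ↑σ' := by
      intro a ha b hb hab
      rcases Finset.mem_image.mp (Finset.mem_coe.mp ha) with ⟨v, hv, rfl⟩
      rcases Finset.mem_image.mp (Finset.mem_coe.mp hb) with ⟨u, hu, rfl⟩
      have h1 : x₀ ⊓ h v = v := (hprop v hv).2
      have h2 : x₀ ⊓ h u = u := (hprop u hu).2
      have : v = u := by rw [← h1, ← h2]; exact hab
      rw [this]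
    have him : (σ'.image fun y => x₀ ⊓ y) = τ := by
      rw [hσ'def, Finset.image_image]
      have : ∀ w ∈ τ, (fun y => x₀ ⊓ y) (h w) = w := fun w hw => (hprop w hw).2
      calc τ.image ((fun y => x₀ ⊓ y) ∘ h) = τ.image id := Finset.image_congr this
        _ = τ := Finset.image_id
    have hinj' : Set.InjOn (fun y => x₀ ⊓ y) ↑(σ.erase x₀) := by
      rw [herase]; exact hinjσ
    refine ⟨((-1 : ℚ) ^ (σ.card - 1)) • Finsupp.single σ (1 : ℚ), ?_, ?_⟩
    · exact Submodule.smul_mem _ _ (Submodule.subset_span ⟨σ, hσA, rfl⟩)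
    · rw [map_smul, phi_apply_single,
        phiBasis_of_mem (Finset.mem_insert_self _ _) hinj', herase, him,
        smul_smul, ← pow_add]
      have : (-1 : ℚ) ^ (σ.card - 1 + (σ.card - 1)) = 1 :=
        Even.neg_one_pow ⟨σ.card - 1, by ring⟩
      rw [this, one_smul]

end Stmt3


end StatementThree

end
/-- `φ` maps `D(A)` onto `D(Ã'')`, vanishes on the subcomplex
`D(A')`, and hence induces a surjective cochain map
`φ̄ : D(A)/D(A') → D(Ã'')`. -/
theorem statement3 {l : ℕ} (r : LinearOrder (Subsp l)) (A : Finset (Subsp l))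
    (harr : IsArrangement A) (x₀ : Subsp l) (hx₀ : x₀ ∈ A) (hord : GoodOrder r A x₀) :
    Submodule.map (phi x₀) (Dsub A) = Dsub (tildeRestriction x₀ (A.erase x₀)) ∧
    (∀ f ∈ Dsub (A.erase x₀), phi x₀ f = 0) ∧
    LinearMap.range (phiBar x₀ A) = Dsub (tildeRestriction x₀ (A.erase x₀)) ∧
    (∀ g : DQuot A x₀, phiBar x₀ A (diffQuot r A x₀ g) = diff r (phiBar x₀ A g)) := by
  have hmap := Stmt3.surj_onto ⟨r⟩ harr hx₀ hord
  refine ⟨hmap, fun f hf => phi_vanish x₀ (Finset.notMem_erase x₀ A) f hf, ?_, ?_⟩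
  · rw [← hmap, phiBar, Submodule.range_liftQ, LinearMap.range_comp, Submodule.range_subtype]
  · intro g
    obtain ⟨v, rfl⟩ := Submodule.Quotient.mk_surjective _ g
    rw [diffQuot, Submodule.mapQ_apply, phiBar, Submodule.liftQ_apply, Submodule.liftQ_apply]
    simp only [LinearMap.comp_apply, Submodule.subtype_apply]
    have hres : ((diffRes r A v : Dsub A) : DFull l) = diff r (v : DFull l) := rfl
    rw [hres]
    exact Stmt3.phi_diff_comm ⟨r⟩ harr hx₀ hord (v : DFull l) v.2
end
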